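/- arXiv:math/0406116 — 6 statements merged into one kernel-verified Lean document; each statement's English description precedes it below -/
import Mathlib

section
/- Let M be a matroid on a finite ground set E and ω : E → ℝ. A subset B ⊆ E is maximal among the subsets of E that contain no set of the form init_ω(C) for a circuit C of M, if and only if B is a basis of M whose ω-weight is minimal among the ω-weights of all bases of M. -/
/-- `initW ω C` is the set of `ω`-maximal elements of `C`. -/
def initW {α : Type*} (ω : α → ℝ) (C : Set α) : Set α :=
  {e ∈ C | ∀ f ∈ C, ω f ≤ ω e}

/-- A circuit of a matroid is a minimal dependent set. -/
def IsCircuit {α : Type*} (M : Matroid α) (C : Set α) : Prop :=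
  Minimal M.Dep C

section Aux

open Set

variable {α : Type*} {M : Matroid α} {ω : α → ℝ} {B C D S X : Set α} {e f x y : α}

lemma IsCircuit.dep (h : IsCircuit M C) : M.Dep C := h.1

lemma IsCircuit.subset_ground (h : IsCircuit M C) : C ⊆ M.E := h.1.subset_ground

lemma IsCircuit.ssubset_indep (hC : IsCircuit M C) (hDC : D ⊂ C) : M.Indep D := by
  by_contra h
  have hdep : M.Dep D := M.dep_of_not_indep h (hDC.subset.trans hC.subset_ground)
  exact hDC.not_subset (hC.2 hdep hDC.subset)

lemma exists_circuit_subset (hD : M.Dep D) (hDfin : D.Finite) :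
    ∃ C, C ⊆ D ∧ IsCircuit M C := by
  obtain ⟨C, hC, hmin⟩ := Set.Finite.exists_minimal (s := {D' | D' ⊆ D ∧ M.Dep D'})
    (hDfin.finite_subsets.subset (fun x hx => hx.1)) ⟨D, Subset.rfl, hD⟩
  refine ⟨C, hC.1, hC.2, fun Y hY hYC => ?_⟩
  exact hmin ⟨hYC.trans hC.1, hY⟩ hYC

lemma IsCircuit.finite (hfin : M.E.Finite) (hC : IsCircuit M C) : C.Finite :=
  hfin.subset hC.subset_ground

lemma circuit_elim_weak (hfin : M.E.Finite) {C₁ C₂ : Set α} (hC₁ : IsCircuit M C₁)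
    (hC₂ : IsCircuit M C₂) (hne : C₁ ≠ C₂) (he : e ∈ C₁ ∩ C₂) :
    M.Dep ((C₁ ∪ C₂) \ {e}) := by
  set Y := C₁ ∪ C₂ with hY
  have hYE : Y ⊆ M.E := union_subset hC₁.subset_ground hC₂.subset_ground
  have hYfin : Y.Finite := hfin.subset hYE
  by_contra hnd
  have hind : M.Indep (Y \ {e}) :=
    M.indep_of_not_dep hnd ((diff_subset).trans hYE)
  -- pick g ∈ C₁ \ C₂
  have hg : ∃ g, g ∈ C₁ \ C₂ := by
    by_contra h
    push_neg at h
    have hsub : C₁ ⊆ C₂ := fun a ha => by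
      by_contra hh; exact h a ⟨ha, hh⟩
    exact hne (hsub.antisymm (hC₂.2 hC₁.dep hsub))
  obtain ⟨g, hgC₁, hgC₂⟩ := hg
  have hind₁ : M.Indep (C₁ \ {g}) :=
    hC₁.ssubset_indep (sdiff_singleton_ssubset.2 hgC₁)
  obtain ⟨I, hI, hsubI⟩ := hind₁.subset_isBasis_of_subset
    ((diff_subset).trans subset_union_left : C₁ \ {g} ⊆ Y) hYE
  have hgI : g ∉ I := by
    intro hgI
    have : C₁ ⊆ I := by
      intro a ha
      rcases eq_or_ne a g with rfl | hag
      · exact hgI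
      · exact hsubI ⟨ha, hag⟩
    exact hC₁.dep.not_indep (hI.indep.subset this)
  have hh : ∃ h, h ∈ C₂ \ I := by
    by_contra h
    push_neg at h
    have : C₂ ⊆ I := fun a ha => by by_contra hh; exact h a ⟨ha, hh⟩
    exact hC₂.dep.not_indep (hI.indep.subset this)
  obtain ⟨h, hhC₂, hhI⟩ := hh
  obtain ⟨J, hJ, hsubJ⟩ := hind.subset_isBasis_of_subset (diff_subset : Y \ {e} ⊆ Y) hYE
  -- cardinalities
  have hIJ : I.ncard = J.ncard := by
    have := hI.encard_eq_encard hJ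
    simp [Set.ncard, this]
  have hgh : g ≠ h := fun hgh => hgC₂ (hgh ▸ hhC₂)
  have hIsub : I ⊆ (Y \ {g}) \ {h} := by
    intro a ha
    refine ⟨⟨hI.subset ha, ?_⟩, ?_⟩
    · rintro rfl; exact hgI ha
    · rintro rfl; exact hhI ha
  have hgY : g ∈ Y := subset_union_left hgC₁
  have hhY : h ∈ Y \ {g} := ⟨subset_union_right hhC₂, fun hh' => hgh (hh' : h = g).symm⟩
  have heY : e ∈ Y := subset_union_left he.1
  have hcard1 : I.ncard ≤ Y.ncard - 2 := by
    have h1 : ((Y \ {g}) \ {h}).ncard = (Y \ {g}).ncard - 1 :=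
      Set.ncard_diff_singleton_of_mem hhY
    have h2 : (Y \ {g}).ncard = Y.ncard - 1 :=
      Set.ncard_diff_singleton_of_mem hgY
    have := Set.ncard_le_ncard hIsub (hYfin.subset ((diff_subset).trans diff_subset))
    omega
  have hcard2 : Y.ncard - 1 ≤ J.ncard := by
    have h2 : (Y \ {e}).ncard = Y.ncard - 1 :=
      Set.ncard_diff_singleton_of_mem heY
    have := Set.ncard_le_ncard hsubJ (hYfin.subset hJ.subset)
    omega
  have hY2 : 2 ≤ Y.ncard := by
    have : {g, h} ⊆ Y := by
      intro a ha; rcases ha with rfl | ha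
      · exact hgY
      · exact (mem_singleton_iff.1 ha) ▸ hhY.1
    have h2 : ({g, h} : Set α).ncard = 2 := Set.ncard_pair hgh
    have := Set.ncard_le_ncard this hYfin
    omega
  omega

lemma circuit_elim_strong (hfin : M.E.Finite) :
    ∀ n : ℕ, ∀ C₁ C₂ : Set α, ∀ e f : α, (C₁ ∪ C₂).ncard = n →
      IsCircuit M C₁ → IsCircuit M C₂ → e ∈ C₁ ∩ C₂ → f ∈ C₁ \ C₂ →
      ∃ C₃, IsCircuit M C₃ ∧ f ∈ C₃ ∧ C₃ ⊆ (C₁ ∪ C₂) \ {e} := by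
  intro n
  induction n using Nat.strong_induction_on with
  | _ n IH =>
  intro C₁ C₂ e f hn hC₁ hC₂ he hf
  have hfinU : (C₁ ∪ C₂).Finite :=
    (hC₁.finite hfin).union (hC₂.finite hfin)
  have hne : C₁ ≠ C₂ := fun h => hf.2 (h ▸ hf.1)
  have hdep := circuit_elim_weak hfin hC₁ hC₂ hne he
  obtain ⟨C₃, hC₃sub, hC₃⟩ := exists_circuit_subset hdep (hfinU.subset diff_subset)
  by_cases hfC₃ : f ∈ C₃
  · exact ⟨C₃, hC₃, hfC₃, hC₃sub⟩
  -- pick g ∈ C₃ ∩ (C₂ \ C₁)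
  have hgex : ∃ g, g ∈ C₃ ∧ g ∈ C₂ \ C₁ := by
    by_contra h
    push_neg at h
    have hsub : C₃ ⊆ C₁ := by
      intro a ha
      rcases (hC₃sub ha).1 with h1 | h2
      · exact h1
      · by_contra hh; exact h a ha ⟨h2, hh⟩
    have hss : C₃ ⊂ C₁ := hsub.ssubset_of_ne (fun hEq => (hC₃sub (hEq ▸ he.1)).2 rfl)
    exact hC₃.dep.not_indep (hC₁.ssubset_indep hss)
  obtain ⟨g, hgC₃, hgC₂, hgC₁⟩ := hgex
  have heC₃ : e ∉ C₃ := fun h => (hC₃sub h).2 rfl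
  have hfC₂ : f ∉ C₂ := hf.2
  -- first IH application : circuits C₂, C₃, common g, e ∈ C₂ \ C₃
  have hU1 : (C₂ ∪ C₃) ⊆ C₁ ∪ C₂ := by
    refine union_subset subset_union_right (hC₃sub.trans diff_subset)
  have hU1lt : (C₂ ∪ C₃).ncard < n := by
    rw [← hn]
    refine Set.ncard_lt_ncard (ssubset_of_subset_of_ne hU1 ?_) hfinU
    intro hEq
    have : f ∈ C₂ ∪ C₃ := hEq ▸ subset_union_left hf.1
    rcases this with h | h
    · exact hfC₂ h
    · exact hfC₃ h
  obtain ⟨C₄, hC₄, heC₄, hC₄sub⟩ := IH _ hU1lt C₂ C₃ g e rfl hC₂ hC₃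
    ⟨hgC₂, hgC₃⟩ ⟨he.2, heC₃⟩
  -- second IH application : circuits C₁, C₄, common e, f ∈ C₁ \ C₄
  have hC₄sub' : C₄ ⊆ C₁ ∪ C₂ := hC₄sub.trans (diff_subset.trans hU1)
  have hfC₄ : f ∉ C₄ := fun h => by
    rcases (hC₄sub h).1 with h' | h'
    · exact hfC₂ h'
    · exact hfC₃ h'
  have hgC₄ : g ∉ C₄ := fun h => (hC₄sub h).2 rfl
  have hU2lt : (C₁ ∪ C₄).ncard < n := by
    rw [← hn]
    refine Set.ncard_lt_ncard (ssubset_of_subset_of_ne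
      (union_subset subset_union_left hC₄sub') ?_) hfinU
    intro hEq
    have : g ∈ C₁ ∪ C₄ := hEq ▸ subset_union_right hgC₂
    rcases this with h | h
    · exact hgC₁ h
    · exact hgC₄ h
  obtain ⟨C₅, hC₅, hfC₅, hC₅sub⟩ := IH _ hU2lt C₁ C₄ e f rfl hC₁ hC₄
    ⟨he.1, heC₄⟩ ⟨hf.1, hfC₄⟩
  refine ⟨C₅, hC₅, hfC₅, hC₅sub.trans ?_⟩
  intro a ha
  exact ⟨(union_subset subset_union_left hC₄sub') ha.1, ha.2⟩

lemma exists_fund_circuit (hfin : M.E.Finite) (hI : M.Indep I) (hdep : M.Dep (insert y I)) :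
    ∃ C, IsCircuit M C ∧ y ∈ C ∧ C ⊆ insert y I := by
  obtain ⟨C, hCsub, hC⟩ := exists_circuit_subset hdep (hfin.subset hdep.subset_ground)
  refine ⟨C, hC, ?_, hCsub⟩
  by_contra hy
  have : C ⊆ I := fun a ha => ((hCsub ha).resolve_left (fun h => hy (h ▸ ha)))
  exact hC.dep.not_indep (hI.subset this)

lemma exchange_base_of_circuit (hfin : M.E.Finite) (hB : M.IsBase B) (hfB : f ∉ B)
    (hD : IsCircuit M D) (hfD : f ∈ D) (hDB : D ⊆ insert f B) (heD : e ∈ D) (hef : e ≠ f) :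
    M.IsBase (insert f (B \ {e})) := by
  have hfE : f ∈ M.E := hD.subset_ground hfD
  have hsubE : insert f (B \ {e}) ⊆ M.E :=
    insert_subset hfE ((diff_subset).trans hB.subset_ground)
  refine hB.exchange_isBase_of_indep hfB ?_
  by_contra hnind
  have hdep : M.Dep (insert f (B \ {e})) := M.dep_of_not_indep hnind hsubE
  obtain ⟨D', hD'sub, hD'⟩ := exists_circuit_subset hdep (hfin.subset hsubE)
  have hfD' : f ∈ D' := by
    by_contra hf'
    have : D' ⊆ B := fun a ha =>
      (((hD'sub ha).resolve_left (fun h => hf' (h ▸ ha))) : a ∈ B \ {e}).1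
    exact hD'.dep.not_indep (hB.indep.subset this)
  have heD' : e ∉ D' := fun h => by
    rcases hD'sub h with h' | h'
    · exact hef h'
    · exact h'.2 rfl
  have hDne : D ≠ D' := fun h => heD' (h ▸ heD)
  have hdep2 := circuit_elim_weak hfin hD hD' hDne ⟨hfD, hfD'⟩
  have hsubB : (D ∪ D') \ {f} ⊆ B := by
    rintro a ⟨ha, haf⟩
    rcases ha with h | h
    · exact ((hDB h).resolve_left haf)
    · exact (((hD'sub h).resolve_left haf) : a ∈ B \ {e}).1
  exact hdep2.not_indep (hB.indep.subset hsubB)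

lemma wsum_finite (hS : S.Finite) : ∑ᶠ e ∈ S, ω e = ∑ e ∈ hS.toFinset, ω e := by
  rw [← finsum_mem_coe_finset]; congr 1; simp

lemma wsum_exchange (hS : S.Finite) (heS : e ∈ S) (hfS : f ∉ S) :
    ∑ᶠ x ∈ insert f (S \ {e}), ω x = (∑ᶠ x ∈ S, ω x) - ω e + ω f := by
  classical
  have hfin2 : (insert f (S \ {e})).Finite := hS.diff.insert f
  rw [wsum_finite hS, wsum_finite hfin2]
  have hset : hfin2.toFinset = insert f (hS.toFinset.erase e) := by
    ext a
    simp only [Set.Finite.mem_toFinset, Set.mem_insert_iff, Set.mem_diff,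
      Finset.mem_insert, Finset.mem_erase, Set.mem_singleton_iff]
    tauto
  have hfne : f ∉ hS.toFinset.erase e := by
    simp only [Finset.mem_erase, Set.Finite.mem_toFinset]
    tauto
  rw [hset, Finset.sum_insert hfne, Finset.sum_erase_eq_sub (by simpa using heS)]
  ring

lemma min_base_no_init (hfin : M.E.Finite) (hB : M.IsBase B)
    (hmin : ∀ B', M.IsBase B' → ∑ᶠ e ∈ B, ω e ≤ ∑ᶠ e ∈ B', ω e) :
    ∀ C, IsCircuit M C → ¬ initW ω C ⊆ B := by
  have hBfin : B.Finite := hfin.subset hB.subset_ground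
  suffices h : ∀ n : ℕ, ∀ C, IsCircuit M C → initW ω C ⊆ B → (C \ B).ncard ≠ n by
    intro C hC hsub
    exact h _ C hC hsub rfl
  intro n
  induction n using Nat.strong_induction_on with
  | _ n IH =>
  intro C hC hsub hn
  have hCfin : C.Finite := hC.finite hfin
  have hCBne : (C \ B).Nonempty := by
    rw [Set.nonempty_iff_ne_empty]
    intro hEq
    have : C ⊆ B := by rwa [diff_eq_empty] at hEq
    exact hC.dep.not_indep (hB.indep.subset this)
  -- f : max weight element of C \ B
  obtain ⟨f, hfCB, hfmax⟩ := Set.exists_max_image (C \ B) ω hCfin.diff hCBne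
  have hfB : f ∉ B := hfCB.2
  have hfC : f ∈ C := hfCB.1
  -- g : max weight element of C
  obtain ⟨g, hgC, hgmax⟩ := Set.exists_max_image C ω hCfin hC.dep.nonempty
  have hgInit : g ∈ initW ω C := ⟨hgC, hgmax⟩
  have hfninit : f ∉ initW ω C := fun h => hfB (hsub h)
  have hflt : ∃ c ∈ C, ω f < ω c := by
    by_contra h
    push_neg at h
    exact hfninit ⟨hfC, h⟩
  obtain ⟨c, hcC, hfc⟩ := hflt
  have hfltg : ω f < ω g := lt_of_lt_of_le hfc (hgmax c hcC)
  -- fundamental circuit of f w.r.t. B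
  have hdep : M.Dep (insert f B) := hB.insert_dep ⟨hC.subset_ground hfC, hfB⟩
  obtain ⟨D, hD, hfD, hDsub⟩ := exists_fund_circuit hfin hB.indep hdep
  by_cases hcase : ∃ e ∈ D, ω f < ω e
  · -- exchange gives a lighter base : contradiction
    obtain ⟨e, heD, hfe⟩ := hcase
    have hef : e ≠ f := fun h => absurd hfe (by rw [h]; exact lt_irrefl _)
    have heB : e ∈ B := (hDsub heD).resolve_left hef
    have hB' := exchange_base_of_circuit hfin hB hfB hD hfD hDsub heD hef
    have hw := wsum_exchange (ω := ω) hBfin heB hfB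
    have := hmin _ hB'
    rw [hw] at this
    linarith
  · push_neg at hcase
    -- all of D has weight ≤ ω f ; g ∉ D
    have hgD : g ∉ D := fun h => absurd (hcase g h) (not_le.2 hfltg)
    obtain ⟨C', hC', hgC', hC'sub⟩ := circuit_elim_strong hfin _ C D f g rfl hC hD
      ⟨hfC, hfD⟩ ⟨hgC, hgD⟩
    have hinit' : initW ω C' ⊆ B := by
      rintro a ⟨haC', hamax⟩
      have haCD : a ∈ (C ∪ D) \ {f} := hC'sub haC'
      have hga : ω g ≤ ω a := hamax g hgC'
      have haC : a ∈ C := by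
        rcases haCD.1 with h | h
        · exact h
        · exact absurd (lt_of_lt_of_le hfltg hga) (not_lt.2 (hcase a h))
      exact hsub ⟨haC, fun b hb => le_trans (hgmax b hb) hga⟩
    have hmeas : C' \ B ⊂ C \ B := by
      constructor
      · rintro a ⟨haC', haB⟩
        have haCD := hC'sub haC'
        have haC : a ∈ C := by
          rcases haCD.1 with h | h
          · exact h
          · exact absurd ((hDsub h).resolve_left haCD.2) haB
        exact ⟨haC, haB⟩
      · intro hsub2
        exact (hC'sub (hsub2 hfCB).1).2 rfl
    have hlt : (C' \ B).ncard < n := hn ▸ Set.ncard_lt_ncard hmeas hCfin.diff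
    exact IH _ hlt C' hC' hinit' rfl

lemma insert_min_no_init (hfin : M.E.Finite)
    (hB_P : ∀ C, IsCircuit M C → ¬ initW ω C ⊆ B) (hBind : M.Indep B)
    (hxE : x ∈ M.E) (hxB : x ∉ B) (hxind : M.Indep (insert x B))
    (hxmin : ∀ y, y ∈ M.E → y ∉ B → M.Indep (insert y B) → ω x ≤ ω y) :
    ∀ C, IsCircuit M C → ¬ initW ω C ⊆ insert x B := by
  suffices h : ∀ n : ℕ, ∀ C, IsCircuit M C → initW ω C ⊆ insert x B →
      (C \ insert x B).ncard ≠ n by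
    intro C hC hsub; exact h _ C hC hsub rfl
  intro n
  induction n using Nat.strong_induction_on with
  | _ n IH =>
  intro C hC hsub hn
  have hCfin : C.Finite := hC.finite hfin
  -- x is a maximal element of C
  have hxinit : x ∈ initW ω C := by
    by_contra hx
    refine hB_P C hC (fun a ha => ?_)
    rcases hsub ha with h | h
    · exact absurd (h ▸ ha) hx
    · exact h
  have hxC : x ∈ C := hxinit.1
  have hxmaxC : ∀ c ∈ C, ω c ≤ ω x := hxinit.2
  have hCne : (C \ insert x B).Nonempty := by
    rw [Set.nonempty_iff_ne_empty]
    intro hEq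
    have : C ⊆ insert x B := by rwa [diff_eq_empty] at hEq
    exact hC.dep.not_indep (hxind.subset this)
  obtain ⟨y, hyC, hyxB⟩ := hCne
  have hyB : y ∉ B := fun h => hyxB (mem_insert_of_mem _ h)
  have hyx : y ≠ x := fun h => hyxB (h ▸ mem_insert _ _)
  have hylt : ω y < ω x := by
    rcases lt_or_eq_of_le (hxmaxC y hyC) with h | h
    · exact h
    · exact absurd (hsub ⟨hyC, fun b hb => h ▸ hxmaxC b hb⟩) hyxB
  have hyE : y ∈ M.E := hC.subset_ground hyC
  by_cases hycase : M.Indep (insert y B)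
  · exact absurd (hxmin y hyE hyB hycase) (not_le.2 hylt)
  · have hdep : M.Dep (insert y B) :=
      M.dep_of_not_indep hycase (insert_subset hyE hBind.subset_ground)
    obtain ⟨D, hD, hyD, hDsub⟩ := exists_fund_circuit hfin hBind hdep
    -- y must be maximal in D
    have hyinitD : y ∈ initW ω D := by
      by_contra hy
      refine hB_P D hD (fun a ha => ?_)
      rcases hDsub ha.1 with h | h
      · exact absurd (h ▸ ha) hy
      · exact h
    have hymaxD : ∀ d ∈ D, ω d ≤ ω y := hyinitD.2
    have hxD : x ∉ D := fun h => by
      rcases hDsub h with h' | h'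
      · exact hyx h'.symm
      · exact hxB h'
    obtain ⟨C', hC', hxC', hC'sub⟩ := circuit_elim_strong hfin _ C D y x rfl hC hD
      ⟨hyC, hyD⟩ ⟨hxC, hxD⟩
    have hinit' : initW ω C' ⊆ insert x B := by
      rintro a ⟨haC', hamax⟩
      have haCD := hC'sub haC'
      have hxa : ω x ≤ ω a := hamax x hxC'
      have haC : a ∈ C := by
        rcases haCD.1 with h | h
        · exact h
        · exact absurd (lt_of_lt_of_le hylt hxa) (not_lt.2 (hymaxD a h))
      exact hsub ⟨haC, fun b hb => le_trans (hxmaxC b hb) hxa⟩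
    have hmeas : C' \ insert x B ⊂ C \ insert x B := by
      constructor
      · rintro a ⟨haC', haB⟩
        have haCD := hC'sub haC'
        have haC : a ∈ C := by
          rcases haCD.1 with h | h
          · exact h
          · have : a ∈ B := by
              rcases hDsub h with h' | h'
              · exact absurd h' haCD.2
              · exact h'
            exact absurd (mem_insert_of_mem _ this) haB
        exact ⟨haC, haB⟩
      · intro hsub2
        exact (hC'sub (hsub2 ⟨hyC, hyxB⟩).1).2 rfl
    have hlt : (C' \ insert x B).ncard < n :=
      hn ▸ Set.ncard_lt_ncard hmeas hCfin.diff
    exact IH _ hlt C' hC' hinit' rfl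

lemma base_P_min (hfin : M.E.Finite) (hB : M.IsBase B)
    (hP : ∀ C, IsCircuit M C → ¬ initW ω C ⊆ B) :
    ∀ B', M.IsBase B' → ∑ᶠ e ∈ B, ω e ≤ ∑ᶠ e ∈ B', ω e := by
  -- the set of minimum-weight bases
  set MB : Set (Set α) := {B₀ | M.IsBase B₀ ∧ ∀ B', M.IsBase B' →
    ∑ᶠ e ∈ B₀, ω e ≤ ∑ᶠ e ∈ B', ω e} with hMB
  have hbasesfin : {B₀ | M.IsBase B₀}.Finite :=
    hfin.finite_subsets.subset (fun B₀ hB₀ => hB₀.subset_ground)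
  have hMBne : MB.Nonempty := by
    obtain ⟨B₁, hB₁⟩ := M.exists_isBase
    obtain ⟨B₀, hB₀, hB₀min⟩ := Set.exists_min_image {B₀ | M.IsBase B₀}
      (fun S => ∑ᶠ e ∈ S, ω e) hbasesfin ⟨B₁, hB₁⟩
    exact ⟨B₀, hB₀, hB₀min⟩
  have hMBfin : MB.Finite := hbasesfin.subset (fun B₀ hB₀ => hB₀.1)
  -- choose a min base maximizing |B ∩ B₀|
  obtain ⟨B₀, hB₀MB, hB₀max⟩ := Set.exists_max_image MB
    (fun S => (B ∩ S).ncard) hMBfin hMBne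
  obtain ⟨hB₀, hB₀min⟩ := hB₀MB
  have hBB₀ : B = B₀ := by
    by_contra hne
    have hBB₀ne : (B \ B₀).Nonempty := by
      rw [Set.nonempty_iff_ne_empty]
      intro hEq
      rw [diff_eq_empty] at hEq
      exact hne (hB.eq_of_subset_isBase hB₀ hEq)
    obtain ⟨b, hbB, hbB₀⟩ := hBB₀ne
    have hdep : M.Dep (insert b B₀) := hB₀.insert_dep ⟨hB.subset_ground hbB, hbB₀⟩
    obtain ⟨D, hD, hbD, hDsub⟩ := exists_fund_circuit hfin hB₀.indep hdep
    -- initW D ⊄ B : get e ∈ initW D \ B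
    obtain ⟨e, heinit, heB⟩ := not_subset.1 (hP D hD)
    have heD : e ∈ D := heinit.1
    have heb : e ≠ b := fun h => heB (h ▸ hbB)
    have heB₀ : e ∈ B₀ := (hDsub heD).resolve_left heb
    have hbe : ω b ≤ ω e := heinit.2 b hbD
    -- exchange
    have hB₀' := exchange_base_of_circuit hfin hB₀ hbB₀ hD hbD hDsub heD heb
    have hB₀fin : B₀.Finite := hfin.subset hB₀.subset_ground
    have hw := wsum_exchange (ω := ω) hB₀fin heB₀ hbB₀
    have hB₀'min : ∀ B'', M.IsBase B'' → ∑ᶠ x ∈ insert b (B₀ \ {e}), ω x ≤ ∑ᶠ x ∈ B'', ω x := by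
      intro B'' hB''
      rw [hw]
      have := hB₀min B'' hB''
      linarith
    -- larger intersection with B
    have hinter : B ∩ insert b (B₀ \ {e}) = insert b (B ∩ B₀) := by
      ext a
      simp only [mem_inter_iff, mem_insert_iff, mem_diff, mem_singleton_iff]
      constructor
      · rintro ⟨haB, rfl | ⟨haB₀, hae⟩⟩
        · exact Or.inl rfl
        · exact Or.inr ⟨haB, haB₀⟩
      · rintro (rfl | ⟨haB, haB₀⟩)
        · exact ⟨hbB, Or.inl rfl⟩
        · refine ⟨haB, Or.inr ⟨haB₀, ?_⟩⟩
          rintro rfl; exact heB haB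
    have hcard : (B ∩ B₀).ncard < (B ∩ insert b (B₀ \ {e})).ncard := by
      rw [hinter]
      have hbnotin : b ∉ B ∩ B₀ := fun h => hbB₀ h.2
      rw [Set.ncard_insert_of_notMem hbnotin ((hfin.subset hB.subset_ground).inter_of_left _)]
      omega
    exact absurd (hB₀max _ ⟨hB₀', hB₀'min⟩) (not_le.2 hcard)
  rw [hBB₀]
  exact hB₀min


end Aux

/-- A subset `B` of the ground set of a matroid `M` (finite ground set) is maximal among
the subsets of the ground set containing no set of the form `initW ω C` for a circuit `C`
of `M`, if and only if `B` is a basis of `M` of minimal `ω`-weight. -/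
theorem stmt1 {α : Type*} (M : Matroid α) (hfin : M.E.Finite) (ω : α → ℝ) (B : Set α) :
    Maximal (fun S : Set α => S ⊆ M.E ∧ ∀ C : Set α, IsCircuit M C → ¬ initW ω C ⊆ S) B ↔
      (M.IsBase B ∧ ∀ B' : Set α, M.IsBase B' → ∑ᶠ e ∈ B, ω e ≤ ∑ᶠ e ∈ B', ω e) := by
  constructor
  · rintro ⟨⟨hBE, hnoinit⟩, hmax⟩
    have hBind : M.Indep B := by
      by_contra h
      have hdep := M.dep_of_not_indep h hBE
      obtain ⟨C, hCsub, hC⟩ := exists_circuit_subset hdep (hfin.subset hBE)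
      exact hnoinit C hC (fun a ha => hCsub ha.1)
    have hbase : M.IsBase B := by
      by_contra hnb
      obtain ⟨B₁, hB₁⟩ := M.exists_isBase
      obtain ⟨e, he, heind⟩ := hBind.exists_insert_of_not_isBase hnb hB₁
      set X := {y | y ∈ M.E ∧ y ∉ B ∧ M.Indep (insert y B)} with hX
      have hXne : X.Nonempty := ⟨e, hB₁.subset_ground he.1, he.2, heind⟩
      have hXfin : X.Finite := hfin.subset (fun a ha => ha.1)
      obtain ⟨x, hxX, hxmin⟩ := Set.exists_min_image X ω hXfin hXne
      have hP' := insert_min_no_init hfin hnoinit hBind hxX.1 hxX.2.1 hxX.2.2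
        (fun y hyE hyB hyind => hxmin y ⟨hyE, hyB, hyind⟩)
      have hsub := hmax ⟨Set.insert_subset hxX.1 hBE, hP'⟩ (Set.subset_insert x B)
      exact hxX.2.1 (hsub (Set.mem_insert x B))
    exact ⟨hbase, base_P_min hfin hbase hnoinit⟩
  · rintro ⟨hB, hmin⟩
    refine ⟨⟨hB.subset_ground, min_base_no_init hfin hB hmin⟩, ?_⟩
    intro S hS hBS
    have hSind : M.Indep S := by
      by_contra h
      have hdep := M.dep_of_not_indep h hS.1
      obtain ⟨C, hCsub, hC⟩ := exists_circuit_subset hdep (hfin.subset hS.1)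
      exact hS.2 C hC (fun a ha => hCsub ha.1)
    exact (hB.eq_of_subset_indep hSind hBS).symm.le
end

section
/- Let M be a matroid on a finite ground set E, ω : E → ℝ, and let B be a basis of M of minimal ω-weight. Then for every circuit C of M, init_ω(C) is not a subset of B. -/
/-- If `B` is a basis of minimal `ω`-weight of a matroid `M` on a finite ground set, then
for every circuit `C` of `M`, the set of `ω`-maximal elements of `C` is not contained
in `B`. -/
theorem stmt2 {α : Type*} (M : Matroid α) (hfin : M.E.Finite) (ω : α → ℝ) (B : Set α)
    (hB : M.IsBase B) (hmin : ∀ B' : Set α, M.IsBase B' → ∑ᶠ e ∈ B, ω e ≤ ∑ᶠ e ∈ B', ω e) :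
    ∀ C : Set α, IsCircuit M C → ¬ initW ω C ⊆ B := by
  intro C hC hsub
  have hCdep : M.Dep C := hC.prop
  have hCE : C ⊆ M.E := hCdep.subset_ground
  have hCfin : C.Finite := hfin.subset hCE
  have hCne : C.Nonempty := hCdep.nonempty
  -- pick a maximal element e of C
  obtain ⟨e, heC, hemax⟩ := Set.exists_max_image C ω hCfin hCne
  have he_init : e ∈ initW ω C := ⟨heC, hemax⟩
  have heB : e ∈ B := hsub he_init
  -- C \ {e} is independent
  have hCe_indep : M.Indep (C \ {e}) := by
    by_contra hdep
    have hssub : C \ {e} ⊂ C := Set.sdiff_singleton_ssubset.mpr heC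
    have : M.Dep (C \ {e}) := ⟨hdep, (Set.diff_subset).trans hCE⟩
    exact hssub.ne (Set.Subset.antisymm hssub.subset (hC.le_of_le this hssub.subset))
  -- e is in the closure of C \ {e}
  have hecl : e ∈ M.closure (C \ {e}) := by
    rw [hCe_indep.mem_closure_iff_of_notMem (by simp)]
    rwa [Set.insert_diff_singleton, Set.insert_eq_self.mpr heC]
  -- the set X = (B \ {e}) ∪ (C \ {e}) spans M.E
  set X : Set α := (B \ {e}) ∪ (C \ {e}) with hX
  have hXE : X ⊆ M.E := Set.union_subset ((Set.diff_subset).trans hB.subset_ground)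
    ((Set.diff_subset).trans hCE)
  have hBsubcl : B ⊆ M.closure X := by
    intro x hxB
    rcases eq_or_ne x e with rfl | hne
    · exact M.closure_mono Set.subset_union_right hecl
    · exact M.subset_closure X hXE (Or.inl ⟨hxB, hne⟩)
  have hclX : M.E ⊆ M.closure X := by
    have h1 : M.closure B ⊆ M.closure (M.closure X) := M.closure_mono hBsubcl
    rw [M.closure_closure, hB.closure_eq] at h1
    exact h1
  -- extend B \ {e} to a basis J of X; J is a base of M
  have hBe_indep : M.Indep (B \ {e}) := hB.indep.subset Set.diff_subset
  obtain ⟨J, hJ, hBeJ⟩ := hBe_indep.subset_isBasis_of_subset Set.subset_union_left hXE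
  have hJbase : M.IsBase J := by
    refine hJ.indep.isBase_of_ground_subset_closure ?_
    rwa [hJ.closure_eq_closure]
  -- J ≠ B \ {e}, so there is f ∈ J \ (B \ {e})
  have hJne : J ≠ B \ {e} := by
    rintro rfl
    have := hJbase.eq_of_subset_isBase hB Set.diff_subset
    exact (Set.sdiff_singleton_ssubset.mpr heB).ne this
  obtain ⟨f, hfJ, hfBe⟩ : ∃ f, f ∈ J \ (B \ {e}) := by
    by_contra h
    push_neg at h
    exact hJne (Set.Subset.antisymm (fun x hx => by
      by_contra hx'; exact h x ⟨hx, hx'⟩) hBeJ)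
  have hfX : f ∈ X := hJ.subset hfJ
  have hfC : f ∈ C \ {e} := hfX.resolve_left hfBe
  have hfB : f ∉ B := fun hfB => hfBe ⟨hfB, hfC.2⟩
  -- ω f < ω e since f ∉ initW ω C
  have hflt : ω f < ω e := by
    have hfni : f ∉ initW ω C := fun h => hfB (hsub h)
    simp only [initW, Set.mem_setOf_eq, hfC.1, true_and, not_forall] at hfni
    obtain ⟨g, hgC, hg⟩ := hfni
    exact lt_of_lt_of_le (not_le.mp hg) (hemax g hgC)
  -- insert f (B \ {e}) is a base
  have hB' : M.IsBase (insert f (B \ {e})) :=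
    hB.exchange_isBase_of_indep hfB (hJ.indep.subset (Set.insert_subset hfJ hBeJ))
  -- weight comparison
  have hBfin : B.Finite := hfin.subset hB.subset_ground
  have hBefin : (B \ {e}).Finite := hBfin.subset Set.diff_subset
  have hsum1 : ∑ᶠ x ∈ insert f (B \ {e}), ω x = ω f + ∑ᶠ x ∈ B \ {e}, ω x :=
    finsum_mem_insert ω (fun h => hfBe h) hBefin
  have hsum2 : ∑ᶠ x ∈ B, ω x = ω e + ∑ᶠ x ∈ B \ {e}, ω x := by
    conv_lhs => rw [← Set.insert_eq_self.mpr heB, ← Set.insert_diff_singleton]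
    exact finsum_mem_insert ω (by simp) hBefin
  have := hmin _ hB'
  rw [hsum1, hsum2] at this
  linarith
end

section
/- Let V be a real vector space, let v_1, …, v_n ∈ V, and let ω ∈ ℝ^n. Then the following are equivalent: (i) for every nonzero a ∈ ℝ^n with a_1 v_1 + ⋯ + a_n v_n = 0 whose support is minimal (with respect to inclusion) among the supports of nonzero linear dependences of v_1, …, v_n, the set of indices i in the support of a at which ω_i is maximal contains both an index i with a_i > 0 and an index j with a_j < 0; (ii) for every t ∈ ℝ there exists a linear functional λ : V → ℝ such that λ(v_i) = 0 for all i with ω_i ≤ t and λ(v_i) > 0 for all i with ω_i > t. -/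
open Finset

private lemma stiemke {X : Type*} [AddCommGroup X] [Module ℝ X]
    {ι : Type*} [Fintype ι] [Nonempty ι] (u : ι → X) :
    (∃ c : ι → ℝ, (∀ i, 0 ≤ c i) ∧ ∑ i, c i = 1 ∧ ∑ i, c i • u i = 0) ∨
    (∃ φ : X →ₗ[ℝ] ℝ, ∀ i, 0 < φ (u i)) := by
  classical
  set W : Submodule ℝ X := Submodule.span ℝ (Set.range u) with hW
  have hfd : FiniteDimensional ℝ W := by
    apply FiniteDimensional.span_of_finite
    exact Set.finite_range u
  set d := Module.finrank ℝ W with hd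
  let B : Module.Basis (Fin d) ℝ W := Module.finBasis ℝ W
  let e : W ≃ₗ[ℝ] (Fin d → ℝ) := B.equivFun
  let uW : ι → W := fun i => ⟨u i, Submodule.subset_span (Set.mem_range_self i)⟩
  let p : ι → (Fin d → ℝ) := fun i => e (uW i)
  by_cases h0 : (0 : Fin d → ℝ) ∈ convexHull ℝ (Set.range p)
  · left
    rw [convexHull_range_eq_exists_affineCombination] at h0
    obtain ⟨s, w, hw0, hw1, hwx⟩ := h0
    rw [Finset.affineCombination_eq_linear_combination s p w hw1] at hwx
    refine ⟨fun i => if i ∈ s then w i else 0, fun i => ?_, ?_, ?_⟩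
    · by_cases hi : i ∈ s <;> simp [hi, hw0 i]
    · rw [Finset.sum_ite_mem, Finset.univ_inter, hw1]
    · have h1 : ∑ i, (if i ∈ s then w i else 0) • uW i = 0 := by
        apply e.injective
        rw [map_sum, map_zero]
        rw [← hwx]
        rw [← Finset.sum_subset (Finset.subset_univ s) (by intro i _ hi; simp [hi])]
        refine Finset.sum_congr rfl fun i hi => ?_
        simp [hi, p]
      have h2 := congrArg (Submodule.subtype W) h1
      rw [map_sum, map_zero] at h2
      rw [← h2]
      refine Finset.sum_congr rfl fun i _ => ?_
      by_cases hi : i ∈ s <;> simp [hi, uW]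
  · right
    obtain ⟨f, u', hu', hf⟩ := geometric_hahn_banach_point_closed
      (convex_convexHull ℝ _) ((Set.finite_range p).isClosed_convexHull ℝ) h0
    obtain ⟨W', hW'⟩ := Submodule.exists_isCompl W
    let π := Submodule.projectionOnto W W' hW'
    refine ⟨(f.toLinearMap.comp e.toLinearMap).comp π, fun i => ?_⟩
    have hπ : π (u i) = uW i := Submodule.projectionOnto_apply_left hW' (uW i)
    have h0' : f 0 = 0 := map_zero f
    have : u' < f (p i) := hf _ (subset_convexHull ℝ _ (Set.mem_range_self i))
    simp only [LinearMap.comp_apply, ContinuousLinearMap.coe_coe, LinearEquiv.coe_coe]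
    rw [hπ]
    have : (0:ℝ) < f (p i) := by
      have := hu'
      rw [h0'] at this
      linarith [hf _ (subset_convexHull ℝ _ (Set.mem_range_self i))]
    exact this

section aux
variable {V : Type*} [AddCommGroup V] [Module ℝ V] {n : ℕ}

private lemma dep_sub (v : Fin n → V) (a c : Fin n → ℝ) (q : ℝ)
    (ha : ∑ i, a i • v i = 0) (hc : ∑ i, c i • v i = 0) :
    ∑ i, (a i - q * c i) • v i = 0 := by
  have h : ∑ i, (a i - q * c i) • v i = (∑ i, a i • v i) - q • (∑ i, c i • v i) := by
    rw [Finset.smul_sum, ← Finset.sum_sub_distrib]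
    exact Finset.sum_congr rfl (fun i _ => by rw [sub_smul, mul_smul])
  rw [h, ha, hc, smul_zero, sub_zero]

private lemma elim_step (v : Fin n → V) (S : Set (Fin n)) (a c : Fin n → ℝ)
    (ha : ∑ i, a i • v i = 0) (hc : ∑ i, c i • v i = 0) (hc0 : c ≠ 0)
    (hsub : ∀ i, c i ≠ 0 → a i ≠ 0) (hcS : ∀ i, i ∉ S → c i = 0) :
    ∃ g : Fin n → ℝ, (∑ i, g i • v i = 0) ∧ (∀ i, i ∉ S → g i = a i) ∧
      (∀ i, g i ≠ 0 → a i ≠ 0) ∧ ∃ j, a j ≠ 0 ∧ g j = 0 := by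
  obtain ⟨j, hj⟩ := Function.ne_iff.1 hc0
  simp only [Pi.zero_apply] at hj
  refine ⟨fun i => a i - (a j / c j) * c i, dep_sub v a c _ ha hc, ?_, ?_, j, hsub j hj, ?_⟩
  · intro i hi; show a i - a j / c j * c i = a i; rw [hcS i hi, mul_zero, sub_zero]
  · intro i hgi
    by_contra hai
    rcases eq_or_ne (c i) 0 with h | h
    · exact hgi (by show a i - a j / c j * c i = 0; rw [hai, h, mul_zero, sub_zero])
    · exact (hsub i h) hai
  · show a j - a j / c j * c j = 0; field_simp; ring

private lemma exists_circuit (v : Fin n → V) (S : Set (Fin n)) (N : ℕ) :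
    ∀ a : Fin n → ℝ, (Finset.univ.filter fun i => a i ≠ 0).card ≤ N →
    (∑ i, a i • v i = 0) → (∀ i, i ∉ S → 0 ≤ a i) → (∃ i, i ∉ S ∧ a i ≠ 0) →
    ∃ b : Fin n → ℝ, (∑ i, b i • v i = 0) ∧ (∀ i, i ∉ S → 0 ≤ b i) ∧
      (∃ i, i ∉ S ∧ b i ≠ 0) ∧
      Minimal (fun s : Set (Fin n) =>
          ∃ c : Fin n → ℝ, c ≠ 0 ∧ ∑ i, c i • v i = 0 ∧ s = {i | c i ≠ 0})
        {i | b i ≠ 0} := by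
  classical
  induction N with
  | zero =>
    intro a hcard _ _ hex
    exfalso
    obtain ⟨i, _, hi⟩ := hex
    have : i ∈ Finset.univ.filter fun i => a i ≠ 0 := by simp [hi]
    have := Finset.card_pos.2 ⟨i, this⟩
    omega
  | succ N ih =>
    intro a hcard ha haS hex
    by_cases hmin : Minimal (fun s : Set (Fin n) =>
        ∃ c : Fin n → ℝ, c ≠ 0 ∧ ∑ i, c i • v i = 0 ∧ s = {i | c i ≠ 0}) {i | a i ≠ 0}
    · exact ⟨a, ha, haS, hex, hmin⟩
    · obtain ⟨i₀, hi₀S, hi₀⟩ := hex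
      have ha0 : a ≠ 0 := fun h => hi₀ (by rw [h]; rfl)
      rw [minimal_iff] at hmin
      push_neg at hmin
      obtain ⟨s, hPs, hssub, hsne⟩ := hmin ⟨a, ha0, ha, rfl⟩
      obtain ⟨b, hb0, hbdep, rfl⟩ := hPs
      have hsub : ∀ i, b i ≠ 0 → a i ≠ 0 := fun i hi => hssub hi
      -- key step: given an eliminator g with smaller support, recurse
      have key : ∀ g : Fin n → ℝ, (∑ i, g i • v i = 0) → (∀ i, i ∉ S → 0 ≤ g i) →
          (∃ i, i ∉ S ∧ g i ≠ 0) → (∀ i, g i ≠ 0 → a i ≠ 0) → (∃ j, a j ≠ 0 ∧ g j = 0) →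
          ∃ b : Fin n → ℝ, (∑ i, b i • v i = 0) ∧ (∀ i, i ∉ S → 0 ≤ b i) ∧
            (∃ i, i ∉ S ∧ b i ≠ 0) ∧
            Minimal (fun s : Set (Fin n) =>
                ∃ c : Fin n → ℝ, c ≠ 0 ∧ ∑ i, c i • v i = 0 ∧ s = {i | c i ≠ 0})
              {i | b i ≠ 0} := by
        intro g hgdep hgS hgex hgsub ⟨j, haj, hgj⟩
        apply ih g _ hgdep hgS hgex
        have hss : (Finset.univ.filter fun i => g i ≠ 0) ⊆
            (Finset.univ.filter fun i => a i ≠ 0).erase j := by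
          intro k hk
          simp only [Finset.mem_filter, Finset.mem_univ, true_and] at hk
          refine Finset.mem_erase.2 ⟨?_, by simp [hgsub k hk]⟩
          rintro rfl; exact hk hgj
        have := Finset.card_le_card hss
        have hj' : j ∈ Finset.univ.filter fun i => a i ≠ 0 := by simp [haj]
        have := Finset.card_erase_of_mem hj'
        omega
      by_cases hbS : ∃ i, i ∉ S ∧ b i ≠ 0
      · -- b has support off S; do the conformal elimination
        obtain ⟨i₁, hi₁S, hi₁⟩ := hbS
        have hai₁ : 0 < a i₁ := lt_of_le_of_ne (haS i₁ hi₁S) (Ne.symm (hsub i₁ hi₁))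
        set b' : Fin n → ℝ := if 0 < b i₁ then b else -b with hb'
        have hb'dep : ∑ i, b' i • v i = 0 := by
          by_cases h : 0 < b i₁
          · simp only [hb', if_pos h]; exact hbdep
          · simp only [hb', if_neg h, Pi.neg_apply, neg_smul]
            rw [Finset.sum_neg_distrib, hbdep, neg_zero]
        have hb'sub : ∀ i, b' i ≠ 0 → a i ≠ 0 := by
          intro i hi
          apply hsub
          intro hbi
          apply hi
          by_cases h : 0 < b i₁ <;> simp [hb', h, hbi]
        have hb'i₁ : 0 < b' i₁ := by
          rcases lt_trichotomy (b i₁) 0 with h | h | h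
          · simp only [hb', if_neg (not_lt.2 h.le), Pi.neg_apply]; linarith
          · exact absurd h hi₁
          · simp only [hb', if_pos h]; exact h
        set R : Finset (Fin n) := Finset.univ.filter fun k => 0 < a k * b' k with hR
        have hi₁R : i₁ ∈ R := by simp [hR, mul_pos hai₁ hb'i₁]
        obtain ⟨j, hjR, hjmin⟩ := Finset.exists_min_image R (fun k => a k / b' k) ⟨i₁, hi₁R⟩
        have hjR' : 0 < a j * b' j := by simpa [hR] using hjR
        have hbj : b' j ≠ 0 := fun h => by simp [h] at hjR'
        have haj : a j ≠ 0 := fun h => by simp [h] at hjR'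
        have hq : 0 < a j / b' j := by
          rcases mul_pos_iff.1 hjR' with ⟨h1, h2⟩ | ⟨h1, h2⟩
          · exact div_pos h1 h2
          · exact div_pos_of_neg_of_neg h1 h2
        set q := a j / b' j with hqdef
        set f : Fin n → ℝ := fun i => a i - q * b' i with hf
        have hfdep : ∑ i, f i • v i = 0 := dep_sub v a b' q ha hb'dep
        have hfsub : ∀ i, f i ≠ 0 → a i ≠ 0 := by
          intro i hi
          by_contra h0
          rcases eq_or_ne (b' i) 0 with h | h
          · exact hi (by simp [hf, h0, h])
          · exact (hb'sub i h) h0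
        have hfj : f j = 0 := by simp [hf, hqdef]; field_simp; ring
        have hfS : ∀ i, i ∉ S → 0 ≤ f i := by
          intro i hiS
          rcases lt_trichotomy (b' i) 0 with h | h | h
          · have : 0 ≤ a i := haS i hiS
            have : 0 < -(q * b' i) := by
              have := mul_pos hq (neg_pos.2 h); linarith
            simp only [hf]; linarith
          · simp [hf, h, haS i hiS]
          · have hiR : i ∈ R := by
              have hai : 0 < a i :=
                lt_of_le_of_ne (haS i hiS) (Ne.symm (hb'sub i h.ne'))
              simp [hR, mul_pos hai h]
            have := hjmin i hiR
            have : q * b' i ≤ a i := by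
              rw [hqdef]
              calc a j / b' j * b' i ≤ a i / b' i * b' i := by
                    apply mul_le_mul_of_nonneg_right (hjmin i hiR) h.le
                _ = a i := by field_simp
            simp only [hf]; linarith
        by_cases hfex : ∃ i, i ∉ S ∧ f i ≠ 0
        · exact key f hfdep hfS hfex hfsub ⟨j, haj, hfj⟩
        · push_neg at hfex
          by_cases hf0 : f = 0
          · -- then a = q • b', so supp a ⊆ supp b, contradicting hsne
            exfalso
            apply hsne
            apply Set.Subset.antisymm _ hssub
            intro k hk
            simp only [Set.mem_setOf_eq] at hk ⊢
            intro hbk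
            have : f k = 0 := by rw [hf0]; rfl
            simp only [hf] at this
            have hb'k : b' k = 0 := by
              by_cases h : 0 < b i₁ <;> simp [hb', h, hbk]
            rw [hb'k, mul_zero, sub_zero] at this
            exact hk this
          · -- f ≠ 0 supported in S: eliminate within S
            have hfS0 : ∀ i, i ∉ S → f i = 0 := hfex
            obtain ⟨g, hg1, hg2, hg3, hg4⟩ := elim_step v S a f ha hfdep hf0 hfsub hfS0
            apply key g hg1 _ _ hg3 hg4
            · intro i hi; rw [hg2 i hi]; exact haS i hi
            · exact ⟨i₀, hi₀S, by rw [hg2 i₀ hi₀S]; exact hi₀⟩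
      · -- b is supported in S
        push_neg at hbS
        have hbS0 : ∀ i, i ∉ S → b i = 0 := hbS
        obtain ⟨g, hg1, hg2, hg3, hg4⟩ := elim_step v S a b ha hbdep hb0 hsub hbS0
        apply key g hg1 _ _ hg3 hg4
        · intro i hi; rw [hg2 i hi]; exact haS i hi
        · exact ⟨i₀, hi₀S, by rw [hg2 i₀ hi₀S]; exact hi₀⟩

end aux

/-- Let `v 1, …, v n` be vectors in a real vector space `V` and `ω ∈ ℝⁿ`.  The following
are equivalent:
(i) for every nonzero linear dependence `a` of the `v i` whose support is minimal among
supports of nonzero linear dependences, the set of indices of the support where `ω` is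
maximal contains an index with `a i > 0` and an index with `a j < 0`;
(ii) for every `t ∈ ℝ` there is a linear functional `lam` on `V` vanishing on all `v i`
with `ω i ≤ t` and strictly positive on all `v i` with `ω i > t`. -/
theorem stmt4 {V : Type*} [AddCommGroup V] [Module ℝ V] (n : ℕ)
    (v : Fin n → V) (ω : Fin n → ℝ) :
    (∀ a : Fin n → ℝ, a ≠ 0 → ∑ i, a i • v i = 0 →
        Minimal (fun s : Set (Fin n) =>
          ∃ b : Fin n → ℝ, b ≠ 0 ∧ ∑ i, b i • v i = 0 ∧ s = {i | b i ≠ 0})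
          {i | a i ≠ 0} →
        (∃ i, 0 < a i ∧ ∀ j, a j ≠ 0 → ω j ≤ ω i) ∧
        (∃ j, a j < 0 ∧ ∀ k, a k ≠ 0 → ω k ≤ ω j)) ↔
      (∀ t : ℝ, ∃ lam : V →ₗ[ℝ] ℝ,
        (∀ i, ω i ≤ t → lam (v i) = 0) ∧ (∀ i, t < ω i → 0 < lam (v i))) := by
  classical
  constructor
  · -- (i) → (ii)
    intro h t
    by_cases hT : ∀ i, ω i ≤ t
    · exact ⟨0, fun i _ => rfl, fun i hi => absurd hi (not_lt.2 (hT i))⟩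
    push_neg at hT
    obtain ⟨i₀, hi₀⟩ := hT
    set S : Set (Fin n) := {i | ω i ≤ t} with hS
    set U : Submodule ℝ V := Submodule.span ℝ (v '' S) with hU
    haveI : Nonempty {i : Fin n // t < ω i} := ⟨⟨i₀, hi₀⟩⟩
    set u : {i : Fin n // t < ω i} → V ⧸ U := fun i => U.mkQ (v i) with hu
    rcases stiemke u with ⟨c, hc0, hc1, hcdep⟩ | ⟨φ, hφ⟩
    · -- 0 in the hull: build a bad dependence and contradict (i)
      exfalso
      -- the combination lies in U
      have hxU : (∑ i : {i : Fin n // t < ω i}, c i • v i) ∈ U := by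
        rw [← Submodule.Quotient.mk_eq_zero]
        have : U.mkQ (∑ i : {i : Fin n // t < ω i}, c i • v i)
            = ∑ i : {i : Fin n // t < ω i}, c i • u i := by
          rw [map_sum]; exact Finset.sum_congr rfl fun i _ => by rw [map_smul]
        rw [← U.mkQ_apply, this, hcdep]
      rw [hU, Finsupp.mem_span_image_iff_linearCombination] at hxU
      obtain ⟨l, hlsupp, hl⟩ := hxU
      rw [Finsupp.mem_supported'] at hlsupp
      set a : Fin n → ℝ := fun i => (if h : t < ω i then c ⟨i, h⟩ else 0) - l i with hadef
      have hadep : ∑ i, a i • v i = 0 := by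
        have h1 : ∑ i : Fin n, (if h : t < ω i then c ⟨i, h⟩ else 0) • v i
            = ∑ i : {i : Fin n // t < ω i}, c i • v i := by
          calc ∑ i : Fin n, (if h : t < ω i then c ⟨i, h⟩ else 0) • v i
              = ∑ i ∈ Finset.univ.filter fun i => t < ω i,
                  (if h : t < ω i then c ⟨i, h⟩ else 0) • v i := by
                refine (Finset.sum_subset (Finset.subset_univ _) ?_).symm
                intro i _ hi
                simp only [Finset.mem_filter, Finset.mem_univ, true_and] at hi
                rw [dif_neg hi, zero_smul]
            _ = ∑ i : {i : Fin n // t < ω i},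
                  (if h : t < ω (i : Fin n) then c ⟨i, h⟩ else 0) • v (i : Fin n) :=
                Finset.sum_subtype _ (fun x => by simp) _
            _ = ∑ i : {i : Fin n // t < ω i}, c i • v i :=
                Finset.sum_congr rfl fun i _ => by rw [dif_pos i.2]
        have h2 : ∑ i : Fin n, l i • v i = Finsupp.linearCombination ℝ v l := by
          rw [Finsupp.linearCombination_apply, Finsupp.sum_fintype]
          intro i; rw [zero_smul]
        have := dep_sub v (fun i => if h : t < ω i then c ⟨i, h⟩ else 0) (fun i => l i) 1
        simp only [one_mul] at this
        have h3 : ∑ i, ((if h : t < ω i then c ⟨i, h⟩ else 0) - l i) • v i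
            = (∑ i : Fin n, (if h : t < ω i then c ⟨i, h⟩ else 0) • v i)
              - ∑ i : Fin n, l i • v i := by
          rw [← Finset.sum_sub_distrib]
          exact Finset.sum_congr rfl fun i _ => by rw [sub_smul]
        rw [hadef]
        simp only []
        rw [h3, h1, h2, hl, sub_self]
      have haS : ∀ i, i ∉ S → 0 ≤ a i := by
        intro i hi
        have hti : t < ω i := not_le.1 hi
        have : l i = 0 := hlsupp i hi
        simp only [hadef, dif_pos hti, this, sub_zero]
        exact hc0 _
      have haex : ∃ i, i ∉ S ∧ a i ≠ 0 := by
        have : ∃ i : {i : Fin n // t < ω i}, c i ≠ 0 := by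
          by_contra hno
          push_neg at hno
          rw [Finset.sum_congr rfl (fun i _ => hno i)] at hc1
          simp at hc1
        obtain ⟨i, hi⟩ := this
        refine ⟨i, not_le.2 i.2, ?_⟩
        have : l (i : Fin n) = 0 := hlsupp _ (not_le.2 i.2)
        simp only [hadef, dif_pos i.2, this, sub_zero]
        simpa using hi
      obtain ⟨b, hbdep, hbS, ⟨i₁, hi₁S, hi₁⟩, hbmin⟩ :=
        exists_circuit v S (Finset.univ.filter fun i => a i ≠ 0).card a le_rfl hadep haS haex
      have hb0 : b ≠ 0 := fun hb => hi₁ (by rw [hb]; rfl)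
      obtain ⟨-, j, hj_neg, hjmax⟩ := h b hb0 hbdep hbmin
      have hjS : j ∈ S := by
        by_contra hjS
        exact absurd (hbS j hjS) (not_le.2 hj_neg)
      have : ω i₁ ≤ ω j := hjmax i₁ hi₁
      have : t < ω i₁ := not_le.1 hi₁S
      have : ω j ≤ t := hjS
      linarith
    · -- separating functional
      refine ⟨φ.comp U.mkQ, fun i hi => ?_, fun i hi => ?_⟩
      · have : v i ∈ U := Submodule.subset_span ⟨i, hi, rfl⟩
        simp only [LinearMap.comp_apply, Submodule.mkQ_apply]
        rw [(Submodule.Quotient.mk_eq_zero U).2 this, map_zero]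
      · exact hφ ⟨i, hi⟩
  · -- (ii) → (i)
    intro h a ha0 hadep _
    set sa : Finset (Fin n) := Finset.univ.filter fun i => a i ≠ 0 with hsa
    have hsane : sa.Nonempty := by
      obtain ⟨i, hi⟩ := Function.ne_iff.1 ha0
      exact ⟨i, by simp [hsa]; simpa using hi⟩
    set m : ℝ := (sa.image ω).max' (hsane.image ω) with hm
    have hωle : ∀ i ∈ sa, ω i ≤ m := fun i hi =>
      Finset.le_max' _ _ (Finset.mem_image_of_mem ω hi)
    set tf : Finset ℝ := (sa.filter fun i => ω i < m).image ω ∪ {m - 1} with htf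
    have htfne : tf.Nonempty := ⟨m - 1, by simp [htf]⟩
    set t : ℝ := tf.max' htfne with ht
    have htm : t < m := by
      have := tf.max'_mem htfne
      rw [← ht] at this
      rw [htf] at this
      rcases Finset.mem_union.1 this with h' | h'
      · obtain ⟨i, hi, hωi⟩ := Finset.mem_image.1 h'
        rw [← hωi]; exact (Finset.mem_filter.1 hi).2
      · simp at h'; rw [h']; linarith
    have hlet : ∀ i ∈ sa, ω i < m → ω i ≤ t := by
      intro i hi hlt
      apply Finset.le_max'
      rw [htf]
      exact Finset.mem_union_left _ (Finset.mem_image_of_mem ω (Finset.mem_filter.2 ⟨hi, hlt⟩))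
    obtain ⟨lam, hlam0, hlam1⟩ := h t
    set M : Finset (Fin n) := sa.filter fun i => ω i = m with hM
    have hMne : M.Nonempty := by
      have hmem := (sa.image ω).max'_mem (hsane.image ω)
      rw [← hm] at hmem
      obtain ⟨i, hi, hωi⟩ := Finset.mem_image.1 hmem
      exact ⟨i, Finset.mem_filter.2 ⟨hi, hωi⟩⟩
    have hMpos : ∀ i ∈ M, 0 < lam (v i) := by
      intro i hi
      rw [hM, Finset.mem_filter] at hi
      exact hlam1 i (hi.2 ▸ htm)
    have key : ∑ i ∈ M, a i * lam (v i) = 0 := by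
      have h0 : (0:ℝ) = lam (∑ i, a i • v i) := by rw [hadep, map_zero]
      rw [map_sum] at h0
      simp only [map_smul, smul_eq_mul] at h0
      rw [← Finset.sum_subset (Finset.subset_univ M)] at h0
      · exact h0.symm
      · intro i _ hiM
        by_cases hai : a i = 0
        · rw [hai, zero_mul]
        · have hisa : i ∈ sa := by simp [hsa, hai]
          have : ω i ≠ m := fun he => hiM (Finset.mem_filter.2 ⟨hisa, he⟩)
          have : ω i < m := lt_of_le_of_ne (hωle i hisa) this
          rw [hlam0 i (hlet i hisa this), mul_zero]
    constructor
    · by_contra hno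
      push_neg at hno
      have hneg : ∀ i ∈ M, a i * lam (v i) < 0 := by
        intro i hi
        have hia : a i ≠ 0 := (Finset.mem_filter.1 (Finset.mem_filter.1 hi).1).2
        have him : ω i = m := (Finset.mem_filter.1 hi).2
        have : ¬ 0 < a i := by
          intro hpos
          obtain ⟨j, hj, hjgt⟩ := hno i hpos
          have : ω j ≤ m := hωle j (by simp [hsa, hj])
          rw [him] at hjgt; linarith
        have : a i < 0 := lt_of_le_of_ne (not_lt.1 this) hia
        exact mul_neg_of_neg_of_pos this (hMpos i hi)
      have := Finset.sum_neg hneg hMne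
      rw [key] at this
      exact lt_irrefl 0 this
    · by_contra hno
      push_neg at hno
      have hpos : ∀ i ∈ M, 0 < a i * lam (v i) := by
        intro i hi
        have hia : a i ≠ 0 := (Finset.mem_filter.1 (Finset.mem_filter.1 hi).1).2
        have him : ω i = m := (Finset.mem_filter.1 hi).2
        have : ¬ a i < 0 := by
          intro hpos
          obtain ⟨j, hj, hjgt⟩ := hno i hpos
          have : ω j ≤ m := hωle j (by simp [hsa, hj])
          rw [him] at hjgt; linarith
        have : 0 < a i := lt_of_le_of_ne (not_lt.1 this) (Ne.symm hia)
        exact mul_pos this (hMpos i hi)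
      have := Finset.sum_pos hpos hMne
      rw [key] at this
      exact lt_irrefl 0 this
end

section
/- Let I ⊆ ℝ[x_1, …, x_n] be an ideal generated by homogeneous linear forms and let ω ∈ ℝ^n. Then the initial ideal init_ω(I) contains no nonzero polynomial all of whose coefficients are nonnegative if and only if for every nonzero linear form f ∈ I whose support is minimal (with respect to inclusion) among the supports of nonzero linear forms in I, the initial form init_ω(f) has both a strictly positive coefficient and a strictly negative coefficient. -/
/-- The `ω`-weight of a monomial exponent vector `a`. -/
def monWt {n : ℕ} (ω : Fin n → ℝ) (a : Fin n →₀ ℕ) : ℝ :=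
  ∑ i : Fin n, ω i * (a i : ℝ)

open scoped Classical in
/-- The initial form of a polynomial `f` with respect to `ω`: the sum of the terms of `f`
whose monomials have maximal `ω`-weight. -/
noncomputable def initForm {n : ℕ} (ω : Fin n → ℝ) (f : MvPolynomial (Fin n) ℝ) :
    MvPolynomial (Fin n) ℝ :=
  ∑ a ∈ f.support.filter (fun a => ∀ b ∈ f.support, monWt ω b ≤ monWt ω a),
    MvPolynomial.monomial a (f.coeff a)

/-- The initial ideal of `I` with respect to `ω`: the ideal generated by the initial forms
of the nonzero elements of `I`. -/
noncomputable def initIdeal {n : ℕ} (ω : Fin n → ℝ) (I : Ideal (MvPolynomial (Fin n) ℝ)) :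
    Ideal (MvPolynomial (Fin n) ℝ) :=
  Ideal.span {g | ∃ f ∈ I, f ≠ 0 ∧ g = initForm ω f}

namespace S5
open MvPolynomial Finset
open scoped Classical

variable {n : ℕ}

noncomputable def linOf (v : Fin n → ℝ) : MvPolynomial (Fin n) ℝ :=
  ∑ i, MvPolynomial.monomial (Finsupp.single i 1) (v i)

def dotP (a b : Fin n → ℝ) : ℝ := ∑ i, a i * b i

def topIn (ω v : Fin n → ℝ) (i : Fin n) : Prop := v i ≠ 0 ∧ ∀ j, v j ≠ 0 → ω j ≤ ω i

noncomputable def initVec (ω v : Fin n → ℝ) : Fin n → ℝ := fun i => if topIn ω v i then v i else 0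

noncomputable def vecOf (f : MvPolynomial (Fin n) ℝ) : Fin n → ℝ :=
  fun i => f.coeff (Finsupp.single i 1)

lemma coeff_linOf (v : Fin n → ℝ) (a : Fin n →₀ ℕ) :
    (linOf v).coeff a = ∑ i, if Finsupp.single i 1 = a then v i else 0 := by
  simp [linOf, MvPolynomial.coeff_sum, MvPolynomial.coeff_monomial]

lemma coeff_linOf_single (v : Fin n → ℝ) (j : Fin n) :
    (linOf v).coeff (Finsupp.single j 1) = v j := by
  rw [coeff_linOf]
  have : ∀ i : Fin n, (Finsupp.single i (1:ℕ) = Finsupp.single j 1) ↔ i = j := by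
    intro i
    constructor
    · intro h; exact (Finsupp.single_left_inj one_ne_zero).mp h
    · rintro rfl; rfl
  simp only [this]
  simp

lemma vecOf_linOf (v : Fin n → ℝ) : vecOf (linOf v) = v := by
  funext i; exact coeff_linOf_single v i

lemma monWt_single (ω : Fin n → ℝ) (j : Fin n) : monWt ω (Finsupp.single j 1) = ω j := by
  unfold monWt
  rw [Finset.sum_eq_single j]
  · simp
  · intro b _ hb; simp [Finsupp.single_apply, Ne.symm hb]
  · simp

lemma degree_one_eq_single {a : Fin n →₀ ℕ} (h : ∑ i, a i = 1) :
    ∃ i, a = Finsupp.single i 1 := by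
  have h1 : ∃ i, a i ≠ 0 := by
    by_contra hc; push_neg at hc
    simp [hc] at h
  obtain ⟨i, hi⟩ := h1
  refine ⟨i, ?_⟩
  have hsplit : a i + ∑ j ∈ univ.erase i, a j = 1 := by
    rw [Finset.add_sum_erase _ _ (mem_univ i)] at *
    exact h
  have hai : a i = 1 := by omega
  have hrest : ∑ j ∈ univ.erase i, a j = 0 := by omega
  ext j
  rcases eq_or_ne j i with rfl | hne
  · simp [hai]
  · have : a j = 0 := by
      have := (Finset.sum_eq_zero_iff.mp hrest) j (by simp [hne])
      exact this
    simp [Finsupp.single_apply, Ne.symm hne, this]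

lemma isHomogeneous_linOf (v : Fin n → ℝ) : (linOf v).IsHomogeneous 1 := by
  apply MvPolynomial.IsHomogeneous.sum
  intro i _
  apply MvPolynomial.isHomogeneous_monomial
  simp [Finsupp.degree_apply, Finsupp.support_single_ne_zero _ one_ne_zero]

lemma linOf_vecOf {f : MvPolynomial (Fin n) ℝ} (hf : f.IsHomogeneous 1) :
    linOf (vecOf f) = f := by
  apply MvPolynomial.ext
  intro a
  rw [coeff_linOf]
  by_cases ha : ∃ i, a = Finsupp.single i 1
  · obtain ⟨i, rfl⟩ := ha
    rw [Finset.sum_eq_single i]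
    · simp [vecOf]
    · intro b _ hb
      rw [if_neg]
      intro hc
      exact hb ((Finsupp.single_left_inj one_ne_zero).mp hc)
    · simp
  · push_neg at ha
    have h0 : f.coeff a = 0 := by
      by_contra hc
      have := hf hc
      have hdeg : ∑ i, a i = 1 := by
        rw [← this]
        simp [Finsupp.weight, Finsupp.linearCombination, Finsupp.sum_fintype]
      obtain ⟨i, hi⟩ := degree_one_eq_single hdeg
      exact ha i hi
    rw [h0]
    apply Finset.sum_eq_zero
    intro i _
    rw [if_neg (fun hc => ha i hc.symm)]

end S5

namespace S5
open MvPolynomial Finset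
open scoped Classical
variable {n : ℕ}

lemma coeff_initForm (ω : Fin n → ℝ) (f : MvPolynomial (Fin n) ℝ) (a : Fin n →₀ ℕ) :
    (initForm ω f).coeff a =
      if a ∈ f.support.filter (fun a => ∀ b ∈ f.support, monWt ω b ≤ monWt ω a)
      then f.coeff a else 0 := by
  unfold initForm
  rw [MvPolynomial.coeff_sum]
  simp only [MvPolynomial.coeff_monomial]
  rw [Finset.sum_ite_eq' (f.support.filter _) a (fun b => f.coeff b)]

lemma exists_top_mon (ω : Fin n → ℝ) {f : MvPolynomial (Fin n) ℝ} (hf : f ≠ 0) :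
    ∃ a ∈ f.support, ∀ b ∈ f.support, monWt ω b ≤ monWt ω a := by
  obtain ⟨a, ha, hmax⟩ := Finset.exists_max_image f.support (monWt ω)
    (MvPolynomial.support_nonempty.mpr hf)
  exact ⟨a, ha, hmax⟩

lemma initForm_ne_zero (ω : Fin n → ℝ) {f : MvPolynomial (Fin n) ℝ} (hf : f ≠ 0) :
    initForm ω f ≠ 0 := by
  obtain ⟨a, ha, hmax⟩ := exists_top_mon ω hf
  intro hc
  have h1 : (initForm ω f).coeff a = f.coeff a := by
    rw [coeff_initForm, if_pos (Finset.mem_filter.mpr ⟨ha, hmax⟩)]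
  rw [hc] at h1
  exact (MvPolynomial.mem_support_iff.mp ha) h1.symm

lemma pos_coeff_initVec (ω : Fin n → ℝ) (v : Fin n → ℝ)
    (h : ∃ a, 0 < (initForm ω (linOf v)).coeff a) : ∃ i, 0 < initVec ω v i := by
  obtain ⟨a, ha⟩ := h
  rw [coeff_initForm] at ha
  by_cases hmem : a ∈ (linOf v).support.filter
      (fun a => ∀ b ∈ (linOf v).support, monWt ω b ≤ monWt ω a)
  · rw [if_pos hmem] at ha
    obtain ⟨hsupp, hmax⟩ := Finset.mem_filter.mp hmem
    rw [coeff_linOf] at ha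
    have : ∃ i ∈ (univ : Finset (Fin n)),
        (0:ℝ) < if Finsupp.single i 1 = a then v i else 0 := by
      by_contra hc; push_neg at hc
      have : (∑ i, if Finsupp.single i 1 = a then v i else 0) ≤ 0 :=
        Finset.sum_nonpos (fun i hi => hc i hi)
      linarith
    obtain ⟨i, _, hipos⟩ := this
    have heq : Finsupp.single i 1 = a := by
      by_contra hne; rw [if_neg hne] at hipos; linarith
    rw [if_pos heq] at hipos
    refine ⟨i, ?_⟩
    have htop : topIn ω v i := by
      refine ⟨ne_of_gt hipos, fun j hj => ?_⟩
      have hbj : Finsupp.single j 1 ∈ (linOf v).support := by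
        rw [MvPolynomial.mem_support_iff, coeff_linOf_single]; exact hj
      have := hmax _ hbj
      rw [monWt_single, ← heq, monWt_single] at this
      exact this
    rw [initVec, if_pos htop]
    exact hipos
  · rw [if_neg hmem] at ha; linarith

lemma neg_coeff_initVec (ω : Fin n → ℝ) (v : Fin n → ℝ)
    (h : ∃ a, (initForm ω (linOf v)).coeff a < 0) : ∃ i, initVec ω v i < 0 := by
  obtain ⟨a, ha⟩ := h
  rw [coeff_initForm] at ha
  by_cases hmem : a ∈ (linOf v).support.filter
      (fun a => ∀ b ∈ (linOf v).support, monWt ω b ≤ monWt ω a)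
  · rw [if_pos hmem] at ha
    obtain ⟨hsupp, hmax⟩ := Finset.mem_filter.mp hmem
    rw [coeff_linOf] at ha
    have : ∃ i ∈ (univ : Finset (Fin n)),
        (if Finsupp.single i 1 = a then v i else 0) < 0 := by
      by_contra hc; push_neg at hc
      have : (0:ℝ) ≤ ∑ i, if Finsupp.single i 1 = a then v i else 0 :=
        Finset.sum_nonneg (fun i hi => hc i hi)
      linarith
    obtain ⟨i, _, hineg⟩ := this
    have heq : Finsupp.single i 1 = a := by
      by_contra hne; rw [if_neg hne] at hineg; linarith
    rw [if_pos heq] at hineg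
    refine ⟨i, ?_⟩
    have htop : topIn ω v i := by
      refine ⟨ne_of_lt hineg, fun j hj => ?_⟩
      have hbj : Finsupp.single j 1 ∈ (linOf v).support := by
        rw [MvPolynomial.mem_support_iff, coeff_linOf_single]; exact hj
      have := hmax _ hbj
      rw [monWt_single, ← heq, monWt_single] at this
      exact this
    rw [initVec, if_pos htop]
    exact hineg
  · rw [if_neg hmem] at ha; linarith

end S5


namespace S5
open MvPolynomial Finset Filter
open scoped Classical
variable {n : ℕ}

open Finset
variable {n : ℕ}


open scoped Classical in

open scoped Classical

lemma exists_topIn (ω : Fin n → ℝ) {v : Fin n → ℝ} (hv : v ≠ 0) : ∃ i, topIn ω v i := by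
  have hne : (univ.filter (fun i => v i ≠ 0)).Nonempty := by
    rcases Function.ne_iff.mp hv with ⟨i, hi⟩
    have hi' : v i ≠ 0 := by simpa using hi
    exact ⟨i, by simp [hi']⟩
  obtain ⟨i, hi, hmax⟩ := Finset.exists_max_image _ ω hne
  refine ⟨i, (Finset.mem_filter.mp hi).2, fun j hj => hmax j (by simp [hj])⟩

lemma initVec_neg (ω : Fin n → ℝ) (v : Fin n → ℝ) : initVec ω (-v) = -initVec ω v := by
  funext i
  have htop : topIn ω (-v) = topIn ω v := by
    funext j; unfold topIn; simp [neg_ne_zero]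
  simp only [initVec, htop, Pi.neg_apply]
  split <;> simp

lemma topIn_pos (ω : Fin n → ℝ) {v : Fin n → ℝ} (hpos : ∀ i, 0 ≤ initVec ω v i)
    {i : Fin n} (hi : topIn ω v i) : 0 < v i := by
  have := hpos i
  rw [initVec, if_pos hi] at this
  exact lt_of_le_of_ne this (Ne.symm hi.1)

lemma card_cancel {v w : Fin n → ℝ} (hsub : ∀ i, w i ≠ 0 → v i ≠ 0) (t : ℝ) (istar : Fin n)
    (h1 : v istar ≠ 0) (h2 : v istar - t * w istar = 0) :
    (univ.filter (fun i => (v - t • w) i ≠ 0)).card < (univ.filter (fun i => v i ≠ 0)).card := by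
  have hss : univ.filter (fun i => (v - t • w) i ≠ 0) ⊆
      (univ.filter (fun i => v i ≠ 0)).erase istar := by
    intro i hi
    simp only [mem_filter, mem_univ, true_and, Pi.sub_apply, Pi.smul_apply, smul_eq_mul] at hi
    refine Finset.mem_erase.mpr ⟨?_, ?_⟩
    · rintro rfl; exact hi h2
    · simp only [mem_filter, mem_univ, true_and]
      by_contra hvi
      have hvi' : v i = 0 := hvi
      have hwi : w i = 0 := by
        by_contra hwi; exact (hsub i hwi) hvi'
      rw [hvi', hwi] at hi; simp at hi
  calc (univ.filter (fun i => (v - t • w) i ≠ 0)).card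
      ≤ ((univ.filter (fun i => v i ≠ 0)).erase istar).card := Finset.card_le_card hss
    _ < (univ.filter (fun i => v i ≠ 0)).card :=
        Finset.card_erase_lt_of_mem (by simp [h1])

lemma stepD (ω : Fin n → ℝ) (V : Submodule ℝ (Fin n → ℝ)) (v w : Fin n → ℝ)
    (hv : v ∈ V) (hv0 : v ≠ 0) (hpos : ∀ i, 0 ≤ initVec ω v i)
    (hw : w ∈ V) (hw0 : w ≠ 0) (hsub : ∀ i, w i ≠ 0 → v i ≠ 0)
    (i1 : Fin n) (hi1v : v i1 ≠ 0) (hi1w : w i1 = 0) :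
    ∃ v', v' ∈ V ∧ v' ≠ 0 ∧
      ((∀ i, 0 ≤ initVec ω v' i) ∨ (∀ i, initVec ω v' i ≤ 0)) ∧
      (univ.filter (fun i => v' i ≠ 0)).card < (univ.filter (fun i => v i ≠ 0)).card := by
  obtain ⟨i0, htop0⟩ := exists_topIn ω hv0
  obtain ⟨iu, htopu⟩ := exists_topIn ω hw0
  have hMule : ω iu ≤ ω i0 := htop0.2 iu (hsub iu htopu.1)
  rcases lt_or_eq_of_le hMule with hlt | heq
  · -- strictly lower top weight
    have hwzero : ∀ i, ω i0 ≤ ω i → w i = 0 := by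
      intro i hi
      by_contra hwi
      exact absurd ((htopu.2 i hwi).trans_lt (hlt.trans_le hi)) (lt_irrefl _)
    set t := v iu / w iu with ht
    refine ⟨v - t • w, V.sub_mem hv (V.smul_mem t hw), ?_, Or.inl ?_, ?_⟩
    · intro hc
      have h := congrFun hc i0
      simp only [Pi.sub_apply, Pi.smul_apply, smul_eq_mul, Pi.zero_apply,
        hwzero i0 le_rfl, mul_zero, sub_zero] at h
      exact htop0.1 h
    · intro i
      rw [initVec]
      split
      next htv' =>
        have hne : (v - t • w) i0 ≠ 0 := by
          simp only [Pi.sub_apply, Pi.smul_apply, smul_eq_mul, hwzero i0 le_rfl, mul_zero,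
            sub_zero]
          exact htop0.1
        have hωi : ω i0 ≤ ω i := htv'.2 i0 hne
        have hwi : w i = 0 := hwzero i hωi
        have hvi' : (v - t • w) i = v i := by
          simp [hwi]
        have hvi : v i ≠ 0 := by rw [← hvi']; exact htv'.1
        have htopvi : topIn ω v i := ⟨hvi, fun j hj => (htop0.2 j hj).trans hωi⟩
        rw [hvi']
        exact (topIn_pos ω hpos htopvi).le
      next => exact le_rfl
    · refine card_cancel hsub t iu (hsub iu htopu.1) ?_
      rw [ht, div_mul_cancel₀ _ htopu.1, sub_self]
  · -- equal top weights
    by_cases hsd : (∀ i, 0 ≤ initVec ω w i) ∨ (∀ i, initVec ω w i ≤ 0)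
    · refine ⟨w, hw, hw0, hsd, ?_⟩
      apply Finset.card_lt_card
      constructor
      · intro i hi
        simp only [mem_filter, mem_univ, true_and] at hi ⊢
        exact hsub i hi
      · intro hc
        have := hc (by simp [hi1v] : i1 ∈ univ.filter (fun i => v i ≠ 0))
        simp [hi1w] at this
    · push_neg at hsd
      obtain ⟨⟨iN0, hN0⟩, ⟨iP0, hP0⟩⟩ := hsd
      -- extract topIn witnesses with signs
      have hmkP : ∃ i, topIn ω w i ∧ 0 < w i := by
        by_cases h : topIn ω w iP0
        · exact ⟨iP0, h, by rwa [initVec, if_pos h] at hP0⟩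
        · rw [initVec, if_neg h] at hP0; exact absurd hP0 (lt_irrefl 0)
      have hmkN : ∃ i, topIn ω w i ∧ w i < 0 := by
        by_cases h : topIn ω w iN0
        · exact ⟨iN0, h, by rwa [initVec, if_pos h] at hN0⟩
        · rw [initVec, if_neg h] at hN0; exact absurd hN0 (lt_irrefl 0)
      obtain ⟨iP, htopP, hPpos⟩ := hmkP
      obtain ⟨iN, htopN, hNneg⟩ := hmkN
      have htopwv : ∀ i, topIn ω w i → topIn ω v i := by
        intro i hi
        have h1 : ω i0 ≤ ω i := by rw [← heq]; exact hi.2 iu htopu.1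
        exact ⟨hsub i hi.1, fun j hj => (htop0.2 j hj).trans h1⟩
      have hTne : (univ.filter (fun i => topIn ω w i ∧ 0 < w i)).Nonempty :=
        ⟨iP, by simp [htopP, hPpos]⟩
      obtain ⟨istar, histar, hmin⟩ := Finset.exists_min_image _ (fun i => v i / w i) hTne
      rw [mem_filter] at histar
      obtain ⟨-, hstart, hstarpos⟩ := histar
      have hvstar : 0 < v istar := topIn_pos ω hpos (htopwv istar hstart)
      set t := v istar / w istar with ht
      have htpos : 0 < t := div_pos hvstar hstarpos
      have hviN : 0 < v iN := topIn_pos ω hpos (htopwv iN htopN)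
      have hv'iN : 0 < (v - t • w) iN := by
        simp only [Pi.sub_apply, Pi.smul_apply, smul_eq_mul]
        nlinarith
      refine ⟨v - t • w, V.sub_mem hv (V.smul_mem t hw), ?_, Or.inl ?_, ?_⟩
      · intro hc
        have := congrFun hc iN
        simp only [Pi.zero_apply] at this
        rw [this] at hv'iN
        exact lt_irrefl _ hv'iN
      · intro i
        rw [initVec]
        split
        next htv' =>
          have hωiN : ω iN ≤ ω i := htv'.2 iN (ne_of_gt hv'iN)
          have hωi0N : ω i0 ≤ ω iN := (htopwv iN htopN).2 i0 htop0.1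
          have hωi : ω i0 ≤ ω i := hωi0N.trans hωiN
          simp only [Pi.sub_apply, Pi.smul_apply, smul_eq_mul]
          by_cases hwi : w i = 0
          · rw [hwi, mul_zero, sub_zero]
            have hvi : v i ≠ 0 := by
              have := htv'.1
              simp only [Pi.sub_apply, Pi.smul_apply, smul_eq_mul, hwi, mul_zero, sub_zero]
                at this
              exact this
            exact (topIn_pos ω hpos ⟨hvi, fun j hj => (htop0.2 j hj).trans hωi⟩).le
          · have htopwi : topIn ω w i := by
              refine ⟨hwi, fun j hj => (htopu.2 j hj).trans ?_⟩
              rw [heq]; exact hωi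
            rcases lt_or_gt_of_ne hwi with hneg | hpos'
            · have hvi : 0 < v i := topIn_pos ω hpos (htopwv i htopwi)
              nlinarith
            · have hisT : i ∈ univ.filter (fun i => topIn ω w i ∧ 0 < w i) := by
                simp [htopwi, hpos']
              have := hmin i hisT
              rw [sub_nonneg]
              calc t * w i ≤ (v i / w i) * w i := by
                    exact mul_le_mul_of_nonneg_right this hpos'.le
                _ = v i := by field_simp
        next => exact le_rfl
      · refine card_cancel hsub t istar (ne_of_gt hvstar) ?_
        rw [ht, div_mul_cancel₀ _ (ne_of_gt hstarpos), sub_self]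


open scoped Classical
variable {n : ℕ}

lemma lemD (ω : Fin n → ℝ) (V : Submodule ℝ (Fin n → ℝ)) :
    ∀ (k : ℕ) (v : Fin n → ℝ), (univ.filter (fun i => v i ≠ 0)).card ≤ k → v ∈ V → v ≠ 0 →
    ((∀ i, 0 ≤ initVec ω v i) ∨ (∀ i, initVec ω v i ≤ 0)) →
    ∃ u, u ∈ V ∧ u ≠ 0 ∧ ((∀ i, 0 ≤ initVec ω u i) ∨ (∀ i, initVec ω u i ≤ 0)) ∧
      ∀ w, w ∈ V → w ≠ 0 → {i | w i ≠ 0} ⊆ {i | u i ≠ 0} → {i | w i ≠ 0} = {i | u i ≠ 0} := by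
  intro k
  induction k with
  | zero =>
    intro v hcard hv hv0 _
    exfalso
    obtain ⟨i, hi⟩ := Function.ne_iff.mp hv0
    have hi' : v i ≠ 0 := by simpa using hi
    have : i ∈ univ.filter (fun i => v i ≠ 0) := by simp [hi']
    have := Finset.card_pos.mpr ⟨i, this⟩
    omega
  | succ k ih =>
    intro v hcard hv hv0 hsd
    by_cases hmin : ∀ w, w ∈ V → w ≠ 0 →
        {i | w i ≠ 0} ⊆ {i | v i ≠ 0} → {i | w i ≠ 0} = {i | v i ≠ 0}
    · exact ⟨v, hv, hv0, hsd, hmin⟩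
    · push_neg at hmin
      obtain ⟨w, hw, hw0, hwsub, hwne⟩ := hmin
      have hi1 : ∃ i1, v i1 ≠ 0 ∧ w i1 = 0 := by
        by_contra hc; push_neg at hc
        apply hwne
        apply Set.Subset.antisymm hwsub
        intro i hi
        exact hc i hi
      obtain ⟨i1, hi1v, hi1w⟩ := hi1
      have hsubfun : ∀ i, w i ≠ 0 → v i ≠ 0 := fun i hi => hwsub hi
      rcases hsd with hpos | hneg
      · obtain ⟨v', hv'V, hv'0, hv'sd, hv'card⟩ :=
          stepD ω V v w hv hv0 hpos hw hw0 hsubfun i1 hi1v hi1w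
        exact ih v' (by omega) hv'V hv'0 hv'sd
      · have hposneg : ∀ i, 0 ≤ initVec ω (-v) i := by
          intro i; rw [initVec_neg]; simpa using hneg i
        have hsubfun' : ∀ i, w i ≠ 0 → (-v) i ≠ 0 := fun i hi => by
          simpa using hsubfun i hi
        obtain ⟨v', hv'V, hv'0, hv'sd, hv'card⟩ :=
          stepD ω V (-v) w (V.neg_mem hv) (by simpa using hv0) hposneg hw hw0 hsubfun'
            i1 (by simpa using hi1v) hi1w
        have hfeq : univ.filter (fun i => (-v) i ≠ 0) = univ.filter (fun i => v i ≠ 0) := by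
          apply Finset.filter_congr
          intro i _
          simp
        rw [hfeq] at hv'card
        exact ih v' (by omega) hv'V hv'0 hv'sd

open Finset
variable {n : ℕ}


open scoped Classical

lemma adapted_aux (ω : Fin n → ℝ) :
    ∀ (m : ℕ) (V : Submodule ℝ (Fin n → ℝ)), Module.finrank ℝ V ≤ m →
    ∃ (k : ℕ) (b : Fin k → Fin n → ℝ) (piv : Fin k → Fin n),
      (∀ j, b j ∈ V) ∧ (∀ j i, b j i ≠ 0 → ω i ≤ ω (piv j)) ∧
      (∀ j m', b j (piv m') = if j = m' then 1 else 0) ∧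
      (∀ w ∈ V, w = ∑ j, w (piv j) • b j) := by
  intro m
  induction m with
  | zero =>
    intro V hrank
    have hbot : V = ⊥ := by
      have : Module.finrank ℝ V = 0 := Nat.le_zero.mp hrank
      exact Submodule.finrank_eq_zero.mp this
    refine ⟨0, Fin.elim0, Fin.elim0, fun j => j.elim0, fun j => j.elim0, fun j => j.elim0, ?_⟩
    intro w hw
    rw [hbot] at hw
    simp [(Submodule.mem_bot ℝ).mp hw]
  | succ m ih =>
    intro V hrank
    by_cases hbot : V = ⊥
    · refine ⟨0, Fin.elim0, Fin.elim0, fun j => j.elim0, fun j => j.elim0, fun j => j.elim0, ?_⟩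
      intro w hw
      rw [hbot] at hw
      simp [(Submodule.mem_bot ℝ).mp hw]
    · obtain ⟨v0, hv0V, hv00⟩ := Submodule.exists_mem_ne_zero_of_ne_bot hbot
      obtain ⟨p0, htop⟩ := exists_topIn ω hv00
      set v1 : Fin n → ℝ := (v0 p0)⁻¹ • v0 with hv1def
      have hv1V : v1 ∈ V := V.smul_mem _ hv0V
      have hv1p0 : v1 p0 = 1 := by
        simp [hv1def, inv_mul_cancel₀ htop.1]
      have hv1wt : ∀ i, v1 i ≠ 0 → ω i ≤ ω p0 := by
        intro i hi
        apply htop.2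
        intro hc
        apply hi
        simp [hv1def, hc]
      set V' : Submodule ℝ (Fin n → ℝ) := V ⊓ LinearMap.ker (LinearMap.proj p0) with hV'def
      have hV'le : V' ≤ V := inf_le_left
      have hv1notV' : v1 ∉ V' := by
        intro hc
        have h2 : v1 p0 = 0 :=
          LinearMap.mem_ker.mp ((Submodule.mem_inf.mp hc).2)
        rw [hv1p0] at h2
        exact one_ne_zero h2
      have hlt : V' < V := lt_of_le_of_ne hV'le (fun hc => hv1notV' (hc ▸ hv1V))
      have hrank' : Module.finrank ℝ V' ≤ m := by
        have := Submodule.finrank_lt_finrank_of_lt hlt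
        omega
      obtain ⟨k', b', piv', hb'V, hb'wt, hb'dual, hb'span⟩ := ih V' hrank'
      have hb'ker : ∀ j, b' j p0 = 0 := by
        intro j
        exact LinearMap.mem_ker.mp ((Submodule.mem_inf.mp (hb'V j)).2)
      set b0 : Fin n → ℝ := v1 - ∑ j, v1 (piv' j) • b' j with hb0def
      have hb0V : b0 ∈ V := by
        apply V.sub_mem hv1V
        apply Submodule.sum_mem
        intro j _
        exact V.smul_mem _ (hV'le (hb'V j))
      have hb0app : ∀ i, b0 i = v1 i - ∑ j, v1 (piv' j) * b' j i := by
        intro i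
        simp [hb0def, Finset.sum_apply]
      have hb0p0 : b0 p0 = 1 := by
        rw [hb0app, hv1p0]
        rw [Finset.sum_eq_zero (fun j _ => by rw [hb'ker j, mul_zero])]
        ring
      have hb0piv' : ∀ m', b0 (piv' m') = 0 := by
        intro m'
        rw [hb0app]
        rw [Finset.sum_eq_single m']
        · rw [hb'dual m' m', if_pos rfl, mul_one]; ring
        · intro j _ hj
          rw [hb'dual j m', if_neg hj, mul_zero]
        · simp
      have hb0wt : ∀ i, b0 i ≠ 0 → ω i ≤ ω p0 := by
        intro i hi
        by_contra hgt
        push_neg at hgt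
        apply hi
        rw [hb0app]
        have hv1i : v1 i = 0 := by
          by_contra hc
          exact absurd (hv1wt i hc) (not_le.mpr hgt)
        rw [hv1i]
        rw [Finset.sum_eq_zero]
        · ring
        · intro j _
          by_cases hcj : v1 (piv' j) = 0
          · rw [hcj, zero_mul]
          · have h1 : ω (piv' j) ≤ ω p0 := hv1wt _ hcj
            have hbji : b' j i = 0 := by
              by_contra hc
              exact absurd ((hb'wt j i hc).trans h1) (not_le.mpr hgt)
            rw [hbji, mul_zero]
      refine ⟨k' + 1, Fin.cons b0 b', Fin.cons p0 piv', ?_, ?_, ?_, ?_⟩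
      · intro j
        refine Fin.cases ?_ ?_ j
        · simpa using hb0V
        · intro j'; simpa using hV'le (hb'V j')
      · intro j
        refine Fin.cases ?_ ?_ j
        · simpa using hb0wt
        · intro j' i hi
          simp only [Fin.cons_succ] at hi ⊢
          exact hb'wt j' i hi
      · intro j m'
        refine Fin.cases ?_ ?_ j <;> [skip; intro j'] <;> refine Fin.cases ?_ ?_ m'
        · simpa using hb0p0
        · intro m''
          simp only [Fin.cons_succ, Fin.cons_zero]
          rw [if_neg (Fin.ne_of_val_ne (by simp))]
          exact hb0piv' m''
        · simp only [Fin.cons_succ, Fin.cons_zero]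
          rw [if_neg (Fin.ne_of_val_ne (by simp))]
          exact hb'ker j'
        · intro m''
          simp only [Fin.cons_succ]
          rw [hb'dual j' m'']
          by_cases h : j' = m''
          · rw [if_pos h, if_pos (by rw [h])]
          · rw [if_neg h, if_neg (by simpa using h)]
      · intro w hw
        set w' : Fin n → ℝ := w - w p0 • b0 with hw'def
        have hw'V' : w' ∈ V' := by
          rw [hV'def]
          apply Submodule.mem_inf.mpr
          constructor
          · exact V.sub_mem hw (V.smul_mem _ hb0V)
          · rw [LinearMap.mem_ker]
            show w' p0 = 0
            simp only [hw'def, Pi.sub_apply, Pi.smul_apply, smul_eq_mul]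
            rw [hb0p0]; ring
        have hspan' := hb'span w' hw'V'
        have hw'piv : ∀ j, w' (piv' j) = w (piv' j) := by
          intro j
          simp only [hw'def, Pi.sub_apply, Pi.smul_apply, smul_eq_mul]
          rw [hb0piv' j]; ring
        rw [Fin.sum_univ_succ]
        simp only [Fin.cons_zero, Fin.cons_succ]
        have : w - w p0 • b0 = ∑ j, w (piv' j) • b' j := by
          rw [← hw'def] at *
          rw [hspan']
          apply Finset.sum_congr rfl
          intro j _
          rw [hw'piv j]
        rw [← this]
        abel

open Finset
variable {n : ℕ}


lemma stiemke (U : Submodule ℝ (Fin n → ℝ))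
    (h : ∀ x ∈ U, (∀ i, 0 ≤ x i) → x = 0) :
    ∃ p : Fin n → ℝ, (∀ i, 0 < p i) ∧ ∀ x ∈ U, dotP p x = 0 := by
  have hdisj : Disjoint (stdSimplex ℝ (Fin n)) (U : Set (Fin n → ℝ)) := by
    rw [Set.disjoint_left]
    rintro x ⟨hx1, hx2⟩ hxU
    have hx0 : x = 0 := h x hxU hx1
    rw [hx0] at hx2
    simp at hx2
  obtain ⟨f, u, v, hfu, huv, hfv⟩ := geometric_hahn_banach_compact_closed
    (convex_stdSimplex ℝ (Fin n)) (isCompact_stdSimplex ℝ (Fin n))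
    U.convex (Submodule.closed_of_finiteDimensional U) hdisj
  have hf0 : ∀ b ∈ U, f b = 0 := by
    intro b hb
    by_contra hfb
    have hmem : ((v - 1) / f b) • b ∈ U := U.smul_mem _ hb
    have := hfv _ hmem
    rw [map_smul] at this
    simp only [smul_eq_mul] at this
    rw [div_mul_cancel₀ _ hfb] at this
    linarith
  have hv0 : v < 0 := by
    have := hfv 0 U.zero_mem
    rw [map_zero] at this
    linarith
  have hsingle : ∀ i : Fin n, Pi.single i (1:ℝ) ∈ stdSimplex ℝ (Fin n) := by
    intro i
    constructor
    · intro j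
      rcases eq_or_ne j i with rfl | hne
      · simp
      · simp [Pi.single_apply, hne]
    · rw [Finset.sum_eq_single i]
      · simp
      · intro j _ hj; simp [Pi.single_apply, hj]
      · simp
  refine ⟨fun i => -f (Pi.single i 1), ?_, ?_⟩
  · intro i
    have := hfu _ (hsingle i)
    simp only [neg_pos]
    linarith
  · intro x hx
    have hfx : f x = ∑ i, x i * f (Pi.single i (1:ℝ)) := by
      have hsm : ∀ i, (Pi.single i (x i) : Fin n → ℝ) = x i • (Pi.single i (1:ℝ) : Fin n → ℝ) := by
        intro i; funext j
        rcases eq_or_ne j i with rfl | hne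
        · simp
        · simp [Pi.single_apply, hne]
      conv_lhs => rw [← Finset.univ_sum_single x]
      rw [map_sum]
      apply Finset.sum_congr rfl
      intro i _
      rw [hsm i, map_smul, smul_eq_mul]
    have hz := hf0 x hx
    rw [hfx] at hz
    unfold dotP
    calc ∑ i, -f (Pi.single i 1) * x i = -∑ i, x i * f (Pi.single i (1:ℝ)) := by
          rw [← Finset.sum_neg_distrib]
          exact Finset.sum_congr rfl (fun i _ => by ring)
      _ = 0 := by rw [hz, neg_zero]
open Finset Filter
variable {n : ℕ}


-- context of facts from the adapted basis
variable (ω p : Fin n → ℝ) {k : ℕ} (b : Fin k → Fin n → ℝ) (piv : Fin k → Fin n)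

noncomputable def uC (s : ℝ) : Fin n → ℝ := fun i => p i * Real.exp (s * ω i)

open scoped Classical in
noncomputable def xC (s : ℝ) : Fin n → ℝ :=
  fun i => uC ω p s i - ∑ j, (if i = piv j then dotP (b j) (uC ω p s) else 0)

lemma dot_span (w : Fin n → ℝ) (hw : w = ∑ j, w (piv j) • b j) (z : Fin n → ℝ) :
    dotP w z = ∑ j, w (piv j) * dotP (b j) z := by
  unfold dotP
  conv_lhs => rw [hw]
  calc ∑ i, (∑ j, w (piv j) • b j) i * z i
      = ∑ i, ∑ j, w (piv j) * (b j i * z i) := by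
        apply Finset.sum_congr rfl; intro i _
        rw [Finset.sum_apply, Finset.sum_mul]
        apply Finset.sum_congr rfl; intro j _
        simp [mul_assoc]
    _ = ∑ j, ∑ i, w (piv j) * (b j i * z i) := Finset.sum_comm
    _ = ∑ j, w (piv j) * ∑ i, b j i * z i := by
        apply Finset.sum_congr rfl; intro j _
        rw [Finset.mul_sum]

lemma xC_dot (w : Fin n → ℝ) (hw : w = ∑ j, w (piv j) • b j) (s : ℝ) :
    dotP w (xC ω p b piv s) = 0 := by
  unfold dotP
  have hterm : ∀ i, w i * xC ω p b piv s i
      = w i * uC ω p s i - ∑ j, (if i = piv j then w i * dotP (b j) (uC ω p s) else 0) := by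
    intro i
    show w i * (uC ω p s i - ∑ j, _) = _
    rw [mul_sub, Finset.mul_sum]
    congr 1
    apply Finset.sum_congr rfl; intro j _
    rw [mul_ite, mul_zero]
  calc ∑ i, w i * xC ω p b piv s i
      = ∑ i, (w i * uC ω p s i - ∑ j, (if i = piv j then w i * dotP (b j) (uC ω p s) else 0)) :=
        Finset.sum_congr rfl (fun i _ => hterm i)
    _ = ∑ i, w i * uC ω p s i - ∑ i, ∑ j, (if i = piv j then w i * dotP (b j) (uC ω p s) else 0) :=
        Finset.sum_sub_distrib _ _
    _ = ∑ i, w i * uC ω p s i - ∑ j, ∑ i, (if i = piv j then w i * dotP (b j) (uC ω p s) else 0) := by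
        rw [Finset.sum_comm]
    _ = ∑ i, w i * uC ω p s i - ∑ j, w (piv j) * dotP (b j) (uC ω p s) := by
        congr 1
        apply Finset.sum_congr rfl; intro j _
        rw [Finset.sum_ite_eq' univ (piv j) (fun i => w i * dotP (b j) (uC ω p s))]
        simp
    _ = 0 := by
        have := dot_span b piv w hw (uC ω p s)
        unfold dotP at this
        rw [this]
        unfold dotP
        rw [sub_self]



open scoped Classical in

open scoped Classical

-- the initial-part coefficient sum vanishes
lemma top_coeff_zero (hp : ∀ i, 0 < p i)
    (hbwt : ∀ j i, b j i ≠ 0 → ω i ≤ ω (piv j))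
    (hbdual : ∀ j m', b j (piv m') = if j = m' then 1 else 0)
    (hperp : ∀ (j : Fin k), dotP p (initVec ω (b j)) = 0) (j : Fin k) :
    ∑ m, (if ω m = ω (piv j) then b j m * p m else 0) = 0 := by
  have hpivj : b j (piv j) = 1 := by rw [hbdual j j, if_pos rfl]
  have h1 : ∀ m, (if ω m = ω (piv j) then b j m * p m else 0)
      = p m * (if topIn ω (b j) m then b j m else 0) := by
    intro m
    by_cases ht : topIn ω (b j) m
    · have hωm : ω m = ω (piv j) := by
        apply le_antisymm (hbwt j m ht.1)
        exact ht.2 (piv j) (by rw [hpivj]; exact one_ne_zero)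
      rw [if_pos hωm, if_pos ht]; ring
    · rw [if_neg ht]
      by_cases hωm : ω m = ω (piv j)
      · rw [if_pos hωm]
        have hbm : b j m = 0 := by
          by_contra hbm
          exact ht ⟨hbm, fun l hl => (hbwt j l hl).trans_eq hωm.symm⟩
        rw [hbm]; ring
      · rw [if_neg hωm]; ring
  rw [Finset.sum_congr rfl (fun m _ => h1 m)]
  exact hperp j

lemma ratio_tendsto (hp : ∀ i, 0 < p i)
    (hbwt : ∀ j i, b j i ≠ 0 → ω i ≤ ω (piv j))
    (hbdual : ∀ j m', b j (piv m') = if j = m' then 1 else 0)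
    (hperp : ∀ (j : Fin k), dotP p (initVec ω (b j)) = 0) (i : Fin n) :
    Tendsto (fun s => xC ω p b piv s i / (p i * Real.exp (s * ω i))) atTop (nhds 1) := by
  have hden : ∀ s, p i * Real.exp (s * ω i) ≠ 0 :=
    fun s => ne_of_gt (mul_pos (hp i) (Real.exp_pos _))
  have hsplit : ∀ s, xC ω p b piv s i / (p i * Real.exp (s * ω i))
      = 1 - ∑ j, (if i = piv j then dotP (b j) (uC ω p s) else 0) / (p i * Real.exp (s * ω i)) := by
    intro s
    show (uC ω p s i - ∑ j, _) / _ = _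
    rw [sub_div, Finset.sum_div]
    congr 1
    show (p i * Real.exp (s * ω i)) / (p i * Real.exp (s * ω i)) = 1
    exact div_self (hden s)
  rw [funext hsplit]
  have hmain : ∀ j, Tendsto
      (fun s => (if i = piv j then dotP (b j) (uC ω p s) else 0) / (p i * Real.exp (s * ω i)))
      atTop (nhds 0) := by
    intro j
    by_cases hij : i = piv j
    · simp only [if_pos hij]
      have hterm : ∀ s, dotP (b j) (uC ω p s) / (p i * Real.exp (s * ω i))
          = ∑ m, (b j m * p m / p i) * Real.exp (s * (ω m - ω i)) := by
        intro s
        unfold dotP uC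
        rw [Finset.sum_div]
        apply Finset.sum_congr rfl
        intro m _
        rw [mul_sub, Real.exp_sub]
        have h1 : Real.exp (s * ω i) ≠ 0 := Real.exp_ne_zero _
        field_simp
      rw [funext hterm]
      have hlim : ∀ m, Tendsto (fun s => (b j m * p m / p i) * Real.exp (s * (ω m - ω i)))
          atTop (nhds (if ω m = ω i then b j m * p m / p i else 0)) := by
        intro m
        by_cases hωm : ω m = ω i
        · rw [if_pos hωm]
          have : (fun s => (b j m * p m / p i) * Real.exp (s * (ω m - ω i)))
              = fun _ => b j m * p m / p i := by
            funext s; rw [hωm, sub_self, mul_zero, Real.exp_zero, mul_one]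
          rw [this]; exact tendsto_const_nhds
        · rw [if_neg hωm]
          by_cases hbm : b j m = 0
          · have : (fun s => (b j m * p m / p i) * Real.exp (s * (ω m - ω i)))
                = fun _ => (0:ℝ) := by
              funext s; rw [hbm]; ring
            rw [this]; exact tendsto_const_nhds
          · have hlt : ω m < ω i := by
              rw [hij]
              exact lt_of_le_of_ne (hbwt j m hbm) (by rw [← hij]; exact hωm)
            have hneg : ω m - ω i < 0 := by linarith
            have h2 : Tendsto (fun s : ℝ => s * (ω m - ω i)) atTop atBot :=
              Filter.Tendsto.atTop_mul_const_of_neg hneg tendsto_id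
            have h3 : Tendsto (fun s : ℝ => Real.exp (s * (ω m - ω i))) atTop (nhds 0) :=
              Real.tendsto_exp_atBot.comp h2
            have h4 := h3.const_mul (b j m * p m / p i)
            rw [mul_zero] at h4
            exact h4
      have := tendsto_finset_sum univ (fun m _ => hlim m)
      have hsum0 : ∑ m, (if ω m = ω i then b j m * p m / p i else 0) = 0 := by
        have h5 : ∀ m, (if ω m = ω i then b j m * p m / p i else 0)
            = (if ω m = ω (piv j) then b j m * p m else 0) / p i := by
          intro m
          rw [← hij]
          by_cases hm : ω m = ω i
          · rw [if_pos hm, if_pos hm]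
          · rw [if_neg hm, if_neg hm, zero_div]
        rw [Finset.sum_congr rfl (fun m _ => h5 m), ← Finset.sum_div,
          top_coeff_zero ω p b piv hp hbwt hbdual hperp j, zero_div]
      rw [hsum0] at this
      exact this
    · simp only [if_neg hij]
      have : (fun s => (0:ℝ) / (p i * Real.exp (s * ω i))) = fun _ => (0:ℝ) := by
        funext s; rw [zero_div]
      rw [this]; exact tendsto_const_nhds
  have := (tendsto_const_nhds : Tendsto (fun _ : ℝ => (1:ℝ)) atTop (nhds 1)).sub
    (tendsto_finset_sum univ (fun j _ => hmain j))
  simpa using this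


lemma key_limit (hp : ∀ i, 0 < p i)
    (hbwt : ∀ j i, b j i ≠ 0 → ω i ≤ ω (piv j))
    (hbdual : ∀ j m', b j (piv m') = if j = m' then 1 else 0)
    (hperp : ∀ (j : Fin k), dotP p (initVec ω (b j)) = 0)
    (f : MvPolynomial (Fin n) ℝ) (hf0 : f ≠ 0)
    (hzero : ∀ s : ℝ, MvPolynomial.eval (xC ω p b piv s) f = 0) :
    MvPolynomial.eval p (initForm ω f) = 0 := by
  obtain ⟨a0, ha0supp, ha0max⟩ := Finset.exists_max_image f.support (monWt ω)
    (MvPolynomial.support_nonempty.mpr hf0)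
  set Wt := monWt ω a0 with hWt
  set r : ℝ → Fin n → ℝ := fun s i => xC ω p b piv s i / (p i * Real.exp (s * ω i)) with hr
  have hden : ∀ s i, p i * Real.exp (s * ω i) ≠ 0 :=
    fun s i => ne_of_gt (mul_pos (hp i) (Real.exp_pos _))
  have hxr : ∀ s i, xC ω p b piv s i = r s i * (p i * Real.exp (s * ω i)) := by
    intro s i
    rw [hr]
    exact (div_mul_cancel₀ _ (hden s i)).symm
  have hrt : ∀ i, Tendsto (fun s => r s i) atTop (nhds 1) :=
    fun i => ratio_tendsto ω p b piv hp hbwt hbdual hperp i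
  have hGzero : ∀ s : ℝ, ∑ a ∈ f.support,
      f.coeff a * ((∏ i, xC ω p b piv s i ^ a i) * Real.exp (-(s * Wt))) = 0 := by
    intro s
    have h1 := hzero s
    rw [MvPolynomial.eval_eq' (xC ω p b piv s) f] at h1
    have h2 : ∀ a ∈ f.support,
        f.coeff a * ((∏ i, xC ω p b piv s i ^ a i) * Real.exp (-(s * Wt)))
        = (f.coeff a * ∏ i, xC ω p b piv s i ^ a i) * Real.exp (-(s * Wt)) := by
      intro a _; ring
    rw [Finset.sum_congr rfl h2, ← Finset.sum_mul, h1, zero_mul]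
  have hterm : ∀ a ∈ f.support,
      (fun s => f.coeff a * ((∏ i, xC ω p b piv s i ^ a i) * Real.exp (-(s * Wt))))
      = fun s => (f.coeff a * ∏ i, p i ^ a i) *
          (Real.exp (s * (monWt ω a - Wt)) * ∏ i, r s i ^ a i) := by
    intro a _
    funext s
    have hpow : ∀ i, xC ω p b piv s i ^ a i
        = r s i ^ a i * (p i ^ a i * Real.exp (s * (ω i * (a i : ℝ)))) := by
      intro i
      rw [hxr s i, mul_pow, mul_pow]
      congr 1
      congr 1
      rw [← Real.exp_nat_mul]
      congr 1
      ring
    rw [Finset.prod_congr rfl (fun i _ => hpow i)]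
    rw [Finset.prod_mul_distrib, Finset.prod_mul_distrib]
    have hexp : ∏ i, Real.exp (s * (ω i * (a i : ℝ))) = Real.exp (s * monWt ω a) := by
      rw [← Real.exp_sum]
      congr 1
      rw [monWt, Finset.mul_sum]
    rw [hexp]
    have hes : Real.exp (s * (monWt ω a - Wt))
        = Real.exp (s * monWt ω a) * Real.exp (-(s * Wt)) := by
      rw [← Real.exp_add]; congr 1; ring
    rw [hes]
    ring
  have hlim : Tendsto (fun s => ∑ a ∈ f.support,
      f.coeff a * ((∏ i, xC ω p b piv s i ^ a i) * Real.exp (-(s * Wt)))) atTop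
      (nhds (∑ a ∈ f.support, if monWt ω a = Wt then f.coeff a * ∏ i, p i ^ a i else 0)) := by
    apply tendsto_finset_sum
    intro a ha
    rw [hterm a ha]
    have hprod1 : Tendsto (fun s => ∏ i, r s i ^ a i) atTop (nhds 1) := by
      have := tendsto_finset_prod (univ : Finset (Fin n)) (fun i _ => (hrt i).pow (a i))
      simpa using this
    by_cases hwa : monWt ω a = Wt
    · rw [if_pos hwa]
      have heq1 : (fun s => Real.exp (s * (monWt ω a - Wt)) * ∏ i, r s i ^ a i)
          = fun s => 1 * ∏ i, r s i ^ a i := by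
        funext s; rw [hwa, sub_self, mul_zero, Real.exp_zero]
      have h2 : Tendsto (fun s => Real.exp (s * (monWt ω a - Wt)) * ∏ i, r s i ^ a i)
          atTop (nhds 1) := by
        rw [heq1]
        simpa using hprod1.const_mul (1:ℝ)
      have := h2.const_mul (f.coeff a * ∏ i, p i ^ a i)
      simpa using this
    · rw [if_neg hwa]
      have hδ : monWt ω a - Wt < 0 := sub_neg.mpr (lt_of_le_of_ne (ha0max a ha) hwa)
      have h2 : Tendsto (fun s : ℝ => Real.exp (s * (monWt ω a - Wt))) atTop (nhds 0) :=
        Real.tendsto_exp_atBot.comp (Filter.Tendsto.atTop_mul_const_of_neg hδ tendsto_id)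
      have h3 := h2.mul hprod1
      rw [zero_mul] at h3
      have := h3.const_mul (f.coeff a * ∏ i, p i ^ a i)
      simpa [mul_zero] using this
  have hzero2 : (∑ a ∈ f.support, if monWt ω a = Wt then f.coeff a * ∏ i, p i ^ a i else 0)
      = 0 := by
    have hconst : (fun s : ℝ => ∑ a ∈ f.support,
        f.coeff a * ((∏ i, xC ω p b piv s i ^ a i) * Real.exp (-(s * Wt))))
        = fun _ => (0:ℝ) := funext hGzero
    have h0 : Tendsto (fun s : ℝ => ∑ a ∈ f.support,
        f.coeff a * ((∏ i, xC ω p b piv s i ^ a i) * Real.exp (-(s * Wt)))) atTop (nhds 0) := by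
      rw [hconst]; exact tendsto_const_nhds
    exact tendsto_nhds_unique hlim h0
  have heval : MvPolynomial.eval p (initForm ω f)
      = ∑ a ∈ f.support.filter (fun a => ∀ b ∈ f.support, monWt ω b ≤ monWt ω a),
          f.coeff a * ∏ i, p i ^ a i := by
    unfold initForm
    rw [map_sum]
    apply Finset.sum_congr rfl
    intro a _
    rw [MvPolynomial.eval_monomial]
    congr 1
    exact Finsupp.prod_pow a p
  have hfilt : f.support.filter (fun a => ∀ b ∈ f.support, monWt ω b ≤ monWt ω a)
      = f.support.filter (fun a => monWt ω a = Wt) := by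
    apply Finset.filter_congr
    intro a ha
    constructor
    · intro h; exact le_antisymm (ha0max a ha) (h a0 ha0supp)
    · intro h bb hbb; rw [h]; exact ha0max bb hbb
  rw [heval, hfilt, Finset.sum_filter]
  exact hzero2

open Finset
variable {n : ℕ}


open scoped Classical in

open scoped Classical

noncomputable def restrL (ω : Fin n → ℝ) (c : ℝ) : (Fin n → ℝ) →ₗ[ℝ] (Fin n → ℝ) where
  toFun x := fun i => if ω i = c then x i else 0
  map_add' x y := by funext i; by_cases h : ω i = c <;> simp [h]
  map_smul' r x := by funext i; by_cases h : ω i = c <;> simp [h]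

def lowSub (ω : Fin n → ℝ) (c : ℝ) : Submodule ℝ (Fin n → ℝ) where
  carrier := {v | ∀ i, v i ≠ 0 → ω i ≤ c}
  add_mem' := by
    intro a b ha hb i hi
    by_cases h1 : a i = 0
    · refine hb i ?_
      intro h2
      exact hi (by show a i + b i = 0; rw [h1, h2, add_zero])
    · exact ha i h1
  zero_mem' := by intro i hi; exact absurd rfl hi
  smul_mem' := by
    intro r v hv i hi
    refine hv i ?_
    intro h
    exact hi (by show r * v i = 0; rw [h, mul_zero])

lemma restrL_apply (ω : Fin n → ℝ) (c : ℝ) (x : Fin n → ℝ) (i : Fin n) :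
    restrL ω c x i = if ω i = c then x i else 0 := rfl

lemma block (ω : Fin n → ℝ) (V : Submodule ℝ (Fin n → ℝ))
    (hno : ∀ v ∈ V, v ≠ 0 → ¬(∀ i, 0 ≤ initVec ω v i)) :
    ∀ x ∈ Submodule.span ℝ {x | ∃ v ∈ V, v ≠ 0 ∧ x = initVec ω v},
      (∀ i, 0 ≤ x i) → x = 0 := by
  set Uc : ℝ → Submodule ℝ (Fin n → ℝ) :=
    fun c => Submodule.map (restrL ω c) (V ⊓ lowSub ω c) with hUc
  set Ubig : Submodule ℝ (Fin n → ℝ) :=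
    ⨅ c : ℝ, Submodule.comap (restrL ω c) (Uc c) with hUbig
  have hgen : {x | ∃ v ∈ V, v ≠ 0 ∧ x = initVec ω v} ⊆ (Ubig : Set (Fin n → ℝ)) := by
    rintro x ⟨v, hvV, hv0, rfl⟩
    rw [hUbig, SetLike.mem_coe, Submodule.mem_iInf]
    intro c
    rw [Submodule.mem_comap]
    obtain ⟨i0, htop⟩ := exists_topIn ω hv0
    by_cases hc : c = ω i0
    · subst hc
      have hkey : restrL ω (ω i0) v = initVec ω v := by
        funext i
        rw [restrL_apply, initVec]
        by_cases h1 : topIn ω v i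
        · rw [if_pos h1, if_pos (le_antisymm (htop.2 i h1.1) (h1.2 i0 htop.1))]
        · rw [if_neg h1]
          by_cases h2 : ω i = ω i0
          · rw [if_pos h2]
            by_contra hvi
            exact h1 ⟨hvi, fun j hj => (htop.2 j hj).trans_eq h2.symm⟩
          · rw [if_neg h2]
      have hkey2 : restrL ω (ω i0) (initVec ω v) = initVec ω v := by
        conv_lhs => rw [← hkey]
        rw [← hkey]
        funext i
        rw [restrL_apply, restrL_apply]
        by_cases h : ω i = ω i0 <;> simp [h]
      rw [hkey2, hUc]
      exact ⟨v, Submodule.mem_inf.mpr ⟨hvV, fun i hi => htop.2 i hi⟩, hkey⟩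
    · have hz : restrL ω c (initVec ω v) = 0 := by
        funext i
        simp only [Pi.zero_apply, restrL_apply]
        by_cases h : ω i = c
        · rw [if_pos h]
          have hnt : ¬ topIn ω v i := by
            intro htopi
            have heq : ω i = ω i0 := le_antisymm (htop.2 i htopi.1) (htopi.2 i0 htop.1)
            exact hc (by rw [← h, heq])
          rw [initVec, if_neg hnt]
        · rw [if_neg h]
      rw [hz]
      exact Submodule.zero_mem _
  intro x hx hxnn
  by_contra hx0
  obtain ⟨i0, hi0⟩ := Function.ne_iff.mp hx0
  have hi0' : x i0 ≠ 0 := by simpa using hi0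
  have hxU : x ∈ Ubig := Submodule.span_le.mpr hgen hx
  rw [hUbig, Submodule.mem_iInf] at hxU
  have hmem := hxU (ω i0)
  rw [Submodule.mem_comap, hUc] at hmem
  obtain ⟨v, hvmem, hveq⟩ := hmem
  obtain ⟨hvV, hvlow⟩ := Submodule.mem_inf.mp hvmem
  have hvio : v i0 ≠ 0 := by
    have := congrFun hveq i0
    rw [restrL_apply, restrL_apply, if_pos rfl, if_pos rfl] at this
    rw [this]
    exact hi0'
  have hIV : initVec ω v = restrL ω (ω i0) v := by
    funext i
    rw [initVec, restrL_apply]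
    by_cases h1 : topIn ω v i
    · rw [if_pos h1, if_pos (le_antisymm (hvlow i h1.1) (h1.2 i0 hvio))]
    · rw [if_neg h1]
      by_cases h2 : ω i = ω i0
      · rw [if_pos h2]
        by_contra hvi
        exact h1 ⟨fun hh => hvi hh.symm, fun j hj => (hvlow j hj).trans_eq h2.symm⟩
      · rw [if_neg h2]
  apply hno v hvV (fun hc => hvio (by rw [hc]; rfl))
  intro i
  rw [hIV, hveq, restrL_apply]
  by_cases h : ω i = ω i0
  · rw [if_pos h]; exact hxnn i
  · rw [if_neg h]



lemma linOf_ne_zero {u : Fin n → ℝ} (hu : u ≠ 0) : linOf u ≠ 0 := by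
  intro hc
  apply hu
  have h := vecOf_linOf u
  rw [hc] at h
  rw [← h]
  funext i
  simp [vecOf]

end S5

namespace S5
open MvPolynomial Finset
open scoped Classical
variable {n : ℕ}

noncomputable def linOfL : (Fin n → ℝ) →ₗ[ℝ] MvPolynomial (Fin n) ℝ where
  toFun := linOf
  map_add' x y := by
    unfold linOf
    rw [← Finset.sum_add_distrib]
    apply Finset.sum_congr rfl
    intro i _
    rw [Pi.add_apply, map_add]
  map_smul' r x := by
    unfold linOf
    simp [Finset.smul_sum, MvPolynomial.smul_monomial, smul_eq_mul]

end S5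

open S5

/-- Let `I` be an ideal of `ℝ[x_1, …, x_n]` generated by homogeneous linear forms, and let
`ω ∈ ℝⁿ`.  Then `initIdeal ω I` contains no nonzero polynomial all of whose coefficients
are nonnegative if and only if for every nonzero linear form `f ∈ I` whose support is
minimal among the supports of nonzero linear forms in `I`, the initial form of `f` has
both a strictly positive and a strictly negative coefficient. -/
theorem stmt5 {n : ℕ} (ω : Fin n → ℝ) (I : Ideal (MvPolynomial (Fin n) ℝ))
    (S : Set (MvPolynomial (Fin n) ℝ)) (hS : ∀ f ∈ S, MvPolynomial.IsHomogeneous f 1)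
    (hI : I = Ideal.span S) :
    (∀ g ∈ initIdeal ω I, (∀ a : Fin n →₀ ℕ, 0 ≤ g.coeff a) → g = 0) ↔
      (∀ f ∈ I, f ≠ 0 → MvPolynomial.IsHomogeneous f 1 →
        Minimal (fun s : Set (Fin n) =>
            ∃ g ∈ I, g ≠ 0 ∧ MvPolynomial.IsHomogeneous g 1 ∧
              s = {i | g.coeff (Finsupp.single i 1) ≠ 0})
          {i | f.coeff (Finsupp.single i 1) ≠ 0} →
        (∃ a : Fin n →₀ ℕ, 0 < (initForm ω f).coeff a) ∧
        (∃ a : Fin n →₀ ℕ, (initForm ω f).coeff a < 0)) := by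
  constructor
  · -- forward: easy direction
    intro hL f hfI hf0 _hfhom _hmin
    have hmem : initForm ω f ∈ initIdeal ω I := by
      unfold initIdeal
      exact Ideal.subset_span ⟨f, hfI, hf0, rfl⟩
    constructor
    · by_contra hpos
      push_neg at hpos
      have hneg : -(initForm ω f) ∈ initIdeal ω I := neg_mem hmem
      have h0 := hL _ hneg (fun a => by
        rw [MvPolynomial.coeff_neg]
        exact neg_nonneg.mpr (hpos a))
      rw [neg_eq_zero] at h0
      exact initForm_ne_zero ω hf0 h0
    · by_contra hneg
      push_neg at hneg
      have h0 := hL _ hmem hneg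
      exact initForm_ne_zero ω hf0 h0
  · -- backward: hard direction
    intro hR g hg hgnn
    set V : Submodule ℝ (Fin n → ℝ) :=
      Submodule.comap (linOfL) (Submodule.restrictScalars ℝ I) with hV
    have hmemV : ∀ v : Fin n → ℝ, v ∈ V ↔ linOf v ∈ I := fun v => Iff.rfl
    -- no sign-definite initial vectors
    have hnoSD : ∀ v ∈ V, v ≠ 0 →
        ¬((∀ i, 0 ≤ initVec ω v i) ∨ (∀ i, initVec ω v i ≤ 0)) := by
      intro v hvV hv0 hsd
      obtain ⟨u, huV, hu0, husd, humin⟩ :=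
        lemD ω V ((Finset.univ.filter (fun i => v i ≠ 0)).card) v le_rfl hvV hv0 hsd
      have hfI : linOf u ∈ I := (hmemV u).mp huV
      have hf0 : linOf u ≠ 0 := linOf_ne_zero hu0
      have hfhom := isHomogeneous_linOf u
      have hsupp : {i | (linOf u).coeff (Finsupp.single i 1) ≠ 0} = {i | u i ≠ 0} := by
        ext i; simp [coeff_linOf_single]
      have hMin : Minimal (fun s : Set (Fin n) =>
          ∃ g' ∈ I, g' ≠ 0 ∧ MvPolynomial.IsHomogeneous g' 1 ∧
            s = {i | g'.coeff (Finsupp.single i 1) ≠ 0})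
          {i | (linOf u).coeff (Finsupp.single i 1) ≠ 0} := by
        constructor
        · exact ⟨linOf u, hfI, hf0, hfhom, rfl⟩
        · rintro s ⟨g', hg'I, hg'0, hg'hom, rfl⟩ hle
          have hgw : linOf (vecOf g') = g' := linOf_vecOf hg'hom
          have hwV : vecOf g' ∈ V := (hmemV _).mpr (by rw [hgw]; exact hg'I)
          have hw0 : vecOf g' ≠ 0 := by
            intro hc
            apply hg'0
            rw [← hgw, hc]
            unfold linOf
            apply Finset.sum_eq_zero
            intro i _
            simp
          have h1 : {i | g'.coeff (Finsupp.single i 1) ≠ 0} = {i | vecOf g' i ≠ 0} := by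
            ext i; simp [vecOf]
          have h2 : {i | vecOf g' i ≠ 0} ⊆ {i | u i ≠ 0} := by
            rw [← h1, ← hsupp]; exact hle
          have := humin (vecOf g') hwV hw0 h2
          rw [hsupp, ← this, ← h1]
      obtain ⟨⟨a1, ha1⟩, ⟨a2, ha2⟩⟩ := hR (linOf u) hfI hf0 hfhom hMin
      have hposi := pos_coeff_initVec ω u ⟨a1, ha1⟩
      have hnegi := neg_coeff_initVec ω u ⟨a2, ha2⟩
      rcases husd with h | h
      · obtain ⟨i, hi⟩ := hnegi; exact absurd (h i) (not_le.mpr hi)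
      · obtain ⟨i, hi⟩ := hposi; exact absurd (h i) (not_le.mpr hi)
    have hnn : ∀ v ∈ V, v ≠ 0 → ¬(∀ i, 0 ≤ initVec ω v i) :=
      fun v hv h0 hge => hnoSD v hv h0 (Or.inl hge)
    have hblock := block ω V hnn
    obtain ⟨p, hp, hperp⟩ :=
      stiemke (Submodule.span ℝ {x | ∃ v ∈ V, v ≠ 0 ∧ x = initVec ω v}) hblock
    have hperp' : ∀ v ∈ V, v ≠ 0 → dotP p (initVec ω v) = 0 := fun v hv h0 =>
      hperp _ (Submodule.subset_span ⟨v, hv, h0, rfl⟩)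
    obtain ⟨k, b, piv, hbV, hbwt, hbdual, hbspan⟩ :=
      adapted_aux ω (Module.finrank ℝ V) V le_rfl
    have hbne : ∀ j, b j ≠ 0 := by
      intro j hc
      have h1 := congrFun hc (piv j)
      rw [hbdual j j, if_pos rfl] at h1
      exact one_ne_zero h1
    have hperpb : ∀ j, dotP p (initVec ω (b j)) = 0 :=
      fun j => hperp' _ (hbV j) (hbne j)
    have hIker : ∀ x : Fin n → ℝ, (∀ v ∈ V, dotP v x = 0) →
        ∀ f ∈ I, MvPolynomial.eval x f = 0 := by
      intro x hx f hf
      have hle : I ≤ RingHom.ker (MvPolynomial.eval x) := by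
        rw [hI, Ideal.span_le]
        intro ℓ hℓ
        rw [SetLike.mem_coe, RingHom.mem_ker]
        have hhom := hS ℓ hℓ
        have hlin : linOf (vecOf ℓ) = ℓ := linOf_vecOf hhom
        have hℓI : ℓ ∈ I := by rw [hI]; exact Ideal.subset_span hℓ
        have hvecV : vecOf ℓ ∈ V := (hmemV _).mpr (by rw [hlin]; exact hℓI)
        have heval : MvPolynomial.eval x ℓ = dotP (vecOf ℓ) x := by
          conv_lhs => rw [← hlin]
          unfold linOf dotP
          rw [map_sum]
          apply Finset.sum_congr rfl
          intro i _
          rw [MvPolynomial.eval_monomial]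
          rw [Finsupp.prod_single_index (by rw [pow_zero])]
          rw [pow_one]
        rw [heval]
        exact hx _ hvecV
      exact RingHom.mem_ker.mp (hle hf)
    have hgz : MvPolynomial.eval p g = 0 := by
      have hle : initIdeal ω I ≤ RingHom.ker (MvPolynomial.eval p) := by
        unfold initIdeal
        rw [Ideal.span_le]
        rintro g' ⟨f, hfI, hf0, rfl⟩
        rw [SetLike.mem_coe, RingHom.mem_ker]
        apply key_limit ω p b piv hp hbwt hbdual hperpb f hf0
        intro s
        exact hIker (xC ω p b piv s)
          (fun v hv => xC_dot ω p b piv v (hbspan v hv) s) f hfI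
      exact RingHom.mem_ker.mp (hle hg)
    rw [MvPolynomial.eval_eq' p g] at hgz
    have hterms : ∀ a ∈ g.support, g.coeff a * ∏ i, p i ^ a i = 0 := by
      have hnn2 : ∀ a ∈ g.support, 0 ≤ g.coeff a * ∏ i, p i ^ a i := fun a _ =>
        mul_nonneg (hgnn a) (Finset.prod_nonneg (fun i _ => pow_nonneg (hp i).le _))
      exact fun a ha => (Finset.sum_eq_zero_iff_of_nonneg hnn2).mp hgz a ha
    apply MvPolynomial.ext
    intro a
    rw [MvPolynomial.coeff_zero]
    by_cases ha : a ∈ g.support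
    · have h1 := hterms a ha
      have hprodpos : (0:ℝ) < ∏ i, p i ^ a i :=
        Finset.prod_pos (fun i _ => pow_pos (hp i) _)
      rcases mul_eq_zero.mp h1 with h | h
      · exact h
      · exact absurd h (ne_of_gt hprodpos)
    · exact MvPolynomial.notMem_support_iff.mp ha
end

section
/- Let n ≥ 1, orient the complete graph on vertex set {1, …, n} by directing each edge from its smaller to its larger endpoint, and let ω assign a real weight ω({i,j}) to each 2-element subset {i,j}. Then the following are equivalent: (i) for all 1 ≤ i < j < k ≤ n, ω({i,k}) = max(ω({i,j}), ω({j,k})); (ii) for every cycle, i.e. every sequence v_0, v_1, …, v_{m-1} of m ≥ 3 distinct vertices with edges e_a = {v_a, v_{a+1 mod m}} for 0 ≤ a ≤ m−1, the maximum of ω over the edges e_0, …, e_{m-1} is attained both at some forward edge (an e_a with v_a < v_{a+1 mod m}) and at some backward edge (an e_b with v_b > v_{b+1 mod m}). -/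
open Finset

private lemma aux_le_left {n : ℕ} {ω : Sym2 (Fin n) → ℝ}
    (h : ∀ i j k : Fin n, i < j → j < k → ω s(i, k) = max (ω s(i, j)) (ω s(j, k)))
    {i j k : Fin n} (hij : i ≤ j) (hjk : j < k) : ω s(j, k) ≤ ω s(i, k) := by
  rcases eq_or_lt_of_le hij with rfl | hij'
  · exact le_refl _
  · rw [h i j k hij' hjk]; exact le_max_right _ _

private lemma aux_le_right {n : ℕ} {ω : Sym2 (Fin n) → ℝ}
    (h : ∀ i j k : Fin n, i < j → j < k → ω s(i, k) = max (ω s(i, j)) (ω s(j, k)))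
    {i j k : Fin n} (hij : i < j) (hjk : j ≤ k) : ω s(i, j) ≤ ω s(i, k) := by
  rcases eq_or_lt_of_le hjk with rfl | hjk'
  · exact le_refl _
  · rw [h i j k hij hjk']; exact le_max_left _ _

private lemma aux_gap_le {n : ℕ} {ω : Sym2 (Fin n) → ℝ}
    (h : ∀ i j k : Fin n, i < j → j < k → ω s(i, k) = max (ω s(i, j)) (ω s(j, k)))
    {t : ℕ} (h1 : t < n) (h2 : t + 1 < n)
    {x y : Fin n} (hx : (x : ℕ) ≤ t) (hy : t < (y : ℕ)) :
    ω s(⟨t, h1⟩, ⟨t + 1, h2⟩) ≤ ω s(x, y) := by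
  have hj : (⟨t, h1⟩ : Fin n) < ⟨t + 1, h2⟩ := by simp [Fin.lt_def]
  have hjy : (⟨t + 1, h2⟩ : Fin n) ≤ y := by
    simp only [Fin.le_def]; omega
  have hxj : x ≤ (⟨t, h1⟩ : Fin n) := by simp only [Fin.le_def]; omega
  have hty : (⟨t, h1⟩ : Fin n) < y := by simp only [Fin.lt_def]; omega
  calc ω s(⟨t, h1⟩, ⟨t + 1, h2⟩) ≤ ω s(⟨t, h1⟩, y) := aux_le_right h hj hjy
    _ ≤ ω s(x, y) := aux_le_left h hxj hty

private lemma aux_exists_gap {n : ℕ} {ω : Sym2 (Fin n) → ℝ}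
    (h : ∀ i j k : Fin n, i < j → j < k → ω s(i, k) = max (ω s(i, j)) (ω s(j, k))) :
    ∀ (d : ℕ) (x y : Fin n), (y : ℕ) - (x : ℕ) ≤ d → x < y →
      ∃ (t : ℕ) (h1 : t < n) (h2 : t + 1 < n), (x : ℕ) ≤ t ∧ t < (y : ℕ) ∧
        ω s(x, y) = ω s(⟨t, h1⟩, ⟨t + 1, h2⟩) := by
  intro d
  induction d with
  | zero =>
    intro x y hd hxy
    have := Fin.lt_def.mp hxy
    omega
  | succ d ih =>
    intro x y hd hxy
    have hxy' : (x : ℕ) < (y : ℕ) := Fin.lt_def.mp hxy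
    have h2 : (x : ℕ) + 1 < n := by have := y.isLt; omega
    by_cases hsucc : (y : ℕ) = (x : ℕ) + 1
    · refine ⟨(x : ℕ), x.isLt, h2, le_refl _, by omega, ?_⟩
      have hy : y = (⟨(x : ℕ) + 1, h2⟩ : Fin n) := Fin.ext hsucc
      rw [hy]
    · set j : Fin n := ⟨(x : ℕ) + 1, h2⟩ with hjdef
      have hxj : x < j := by simp [hjdef, Fin.lt_def]
      have hjy : j < y := by simp only [hjdef, Fin.lt_def]; omega
      have hmax := h x j y hxj hjy
      rcases le_total (ω s(x, j)) (ω s(j, y)) with hle | hle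
      · obtain ⟨t, ht1, ht2, htx, hty, hval⟩ :=
          ih j y (by simp only [hjdef]; omega) hjy
        refine ⟨t, ht1, ht2, ?_, hty, ?_⟩
        · simp only [hjdef] at htx; omega
        · rw [hmax, max_eq_right hle, hval]
      · refine ⟨(x : ℕ), x.isLt, h2, le_refl _, by omega, ?_⟩
        rw [hmax, max_eq_left hle]

private lemma aux_sum_pos_neg {k : ℕ} (f : Fin k → ℤ)
    (h0 : ∑ a, f a = 0) {a0 : Fin k} (hpos : 0 < f a0) : ∃ b, f b < 0 := by
  by_contra hcon
  push_neg at hcon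
  have h1 : 0 < ∑ a, f a :=
    Finset.sum_pos' (fun i _ => hcon i) ⟨a0, Finset.mem_univ _, hpos⟩
  omega

private lemma aux_cross_iff {m n : ℕ} (v : Fin (m + 3) → Fin n) (t : ℕ) :
    (∃ a, (v a : ℕ) ≤ t ∧ t < (v (a + 1) : ℕ)) ↔
      (∃ a, (v (a + 1) : ℕ) ≤ t ∧ t < (v a : ℕ)) := by
  set g : Fin (m + 3) → ℤ := fun a => if (v a : ℕ) ≤ t then 1 else 0 with hg
  have hshift : ∑ a, g (a + 1) = ∑ a, g a :=
    Fintype.sum_equiv (Equiv.addRight (1 : Fin (m + 3))) _ _ (fun a => rfl)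
  have hsum : ∑ a, (g a - g (a + 1)) = 0 := by
    rw [Finset.sum_sub_distrib, hshift, sub_self]
  have hsum' : ∑ a, (g (a + 1) - g a) = 0 := by
    rw [Finset.sum_sub_distrib, hshift, sub_self]
  have key : ∀ a : Fin (m + 3),
      (0 < g a - g (a + 1) ↔ (v a : ℕ) ≤ t ∧ t < (v (a + 1) : ℕ)) ∧
      (g a - g (a + 1) < 0 ↔ (v (a + 1) : ℕ) ≤ t ∧ t < (v a : ℕ)) := by
    intro a
    simp only [hg]
    by_cases h1 : (v a : ℕ) ≤ t <;> by_cases h2 : (v (a + 1) : ℕ) ≤ t <;>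
      simp [h1, h2] <;> omega
  constructor
  · rintro ⟨a, ha⟩
    obtain ⟨b, hb⟩ := aux_sum_pos_neg _ hsum ((key a).1.mpr ha)
    exact ⟨b, (key b).2.mp hb⟩
  · rintro ⟨a, ha⟩
    have hpos : 0 < g (a + 1) - g a := by
      have := (key a).2.mpr ha; omega
    obtain ⟨b, hb⟩ := aux_sum_pos_neg _ hsum' hpos
    refine ⟨b, (key b).1.mp ?_⟩
    omega

/-- Orient the complete graph on `Fin n` (with `n ≥ 1`) from smaller to larger endpoint,
and let `ω` assign a real weight to each edge (2-element subset).  Then the following are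
equivalent:
(i) for all `i < j < k`, `ω {i,k} = max (ω {i,j}) (ω {j,k})`;
(ii) in every cycle `v 0, v 1, …, v (m-1)` (`m ≥ 3`, vertices distinct), the maximum of
`ω` over the edges of the cycle is attained both at some forward edge and at some
backward edge. -/
theorem stmt6 (n : ℕ) (hn : 1 ≤ n) (ω : Sym2 (Fin n) → ℝ) :
    (∀ i j k : Fin n, i < j → j < k → ω s(i, k) = max (ω s(i, j)) (ω s(j, k))) ↔
      (∀ (m : ℕ) (v : Fin (m + 3) → Fin n), Function.Injective v →
        ((∃ a : Fin (m + 3), v a < v (a + 1) ∧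
            ∀ b : Fin (m + 3), ω s(v b, v (b + 1)) ≤ ω s(v a, v (a + 1))) ∧
         (∃ a : Fin (m + 3), v (a + 1) < v a ∧
            ∀ b : Fin (m + 3), ω s(v b, v (b + 1)) ≤ ω s(v a, v (a + 1))))) := by
  constructor
  · intro h m v hv
    obtain ⟨a0, ha0⟩ := Finite.exists_max (fun a => ω s(v a, v (a + 1)))
    have hone : (1 : Fin (m + 3)) ≠ 0 := by
      simp [Fin.ext_iff]
    have hne : v a0 ≠ v (a0 + 1) := by
      intro hcontra
      have h1 : a0 = a0 + 1 := hv hcontra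
      have : (1 : Fin (m + 3)) = 0 := (left_eq_add.mp h1)
      exact hone this
    -- helper that finishes both goals once we have a gap t with value equal to the max
    rcases lt_or_gt_of_ne hne with hf | hb
    · -- max edge is forward
      obtain ⟨t, h1, h2, htx, hty, hval⟩ :=
        aux_exists_gap h ((v (a0 + 1) : ℕ) - (v a0 : ℕ)) (v a0) (v (a0 + 1)) (le_refl _) hf
      obtain ⟨b, hb1, hb2⟩ := (aux_cross_iff v t).mp ⟨a0, htx, hty⟩
      have hblt : v (b + 1) < v b := Fin.lt_def.mpr (by omega)
      have hbig : ω s(v a0, v (a0 + 1)) ≤ ω s(v b, v (b + 1)) := by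
        rw [hval, Sym2.eq_swap (a := v b)]
        exact aux_gap_le h h1 h2 hb1 hb2
      exact ⟨⟨a0, hf, fun c => ha0 c⟩,
        ⟨b, hblt, fun c => le_trans (ha0 c) hbig⟩⟩
    · -- max edge is backward
      have hswap : ω s(v a0, v (a0 + 1)) = ω s(v (a0 + 1), v a0) := by
        rw [Sym2.eq_swap]
      obtain ⟨t, h1, h2, htx, hty, hval⟩ :=
        aux_exists_gap h ((v a0 : ℕ) - (v (a0 + 1) : ℕ)) (v (a0 + 1)) (v a0) (le_refl _) hb
      obtain ⟨b, hb1, hb2⟩ := (aux_cross_iff v t).mpr ⟨a0, htx, hty⟩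
      have hblt : v b < v (b + 1) := Fin.lt_def.mpr (by omega)
      have hbig : ω s(v a0, v (a0 + 1)) ≤ ω s(v b, v (b + 1)) := by
        rw [hswap, hval]
        exact aux_gap_le h h1 h2 hb1 hb2
      exact ⟨⟨b, hblt, fun c => le_trans (ha0 c) hbig⟩,
        ⟨a0, hb, fun c => ha0 c⟩⟩
  · intro h i j k hij hjk
    have hik : i < k := hij.trans hjk
    set v : Fin (0 + 3) → Fin n := ![i, j, k] with hvdef
    have hv0 : v 0 = i := rfl
    have hv1 : v 1 = j := rfl
    have hv2 : v 2 = k := rfl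
    have hinj : Function.Injective v := by
      intro a b hab
      fin_cases a <;> fin_cases b <;>
        simp_all [hvdef, hij.ne, hjk.ne, hik.ne, hij.ne', hjk.ne', hik.ne']
    obtain ⟨⟨a, haf, hamax⟩, ⟨b, hbb, hbmax⟩⟩ := h 0 v hinj
    have hupper : max (ω s(i, j)) (ω s(j, k)) ≤ ω s(i, k) := by
      fin_cases b
      · exact absurd (show j < i from hbb) (not_lt_of_gt hij)
      · exact absurd (show k < j from hbb) (not_lt_of_gt hjk)
      · have h0 : ω s(i, j) ≤ ω s(k, i) := hbmax 0
        have h1 : ω s(j, k) ≤ ω s(k, i) := hbmax 1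
        rw [Sym2.eq_swap (a := k)] at h0 h1
        exact max_le h0 h1
    have hlower : ω s(i, k) ≤ max (ω s(i, j)) (ω s(j, k)) := by
      fin_cases a
      · have h2 : ω s(k, i) ≤ ω s(i, j) := hamax 2
        rw [Sym2.eq_swap (a := k)] at h2
        exact le_trans h2 (le_max_left _ _)
      · have h2 : ω s(k, i) ≤ ω s(j, k) := hamax 2
        rw [Sym2.eq_swap (a := k)] at h2
        exact le_trans h2 (le_max_right _ _)
      · exact absurd (show k < i from haf) (not_lt_of_gt hik)
    exact le_antisymm hlower hupper
end

section
/- Let P be a finite partially ordered set with n elements such that for every x ∈ P the set {y ∈ P : y ≤ x} is a chain. Then the number of bijections f : P → {1, …, n} satisfying f(x) < f(y) whenever x < y, multiplied by ∏_{x ∈ P} |{y ∈ P : x ≤ y}|, equals n!. -/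
open Finset

section MinLemmas
variable {P : Type*} [Fintype P] [PartialOrder P]


lemma exists_unique_min (hchain : ∀ x : P, IsChain (· ≤ ·) {y : P | y ≤ x}) (y : P) :
    ∃ x : P, IsMin x ∧ x ≤ y ∧ ∀ z : P, IsMin z → z ≤ y → z = x := by
  classical
  set S : Finset P := univ.filter (fun z => z ≤ y) with hS
  have hyS : y ∈ S := by simp [hS]
  obtain ⟨m, hmS, hmin⟩ := S.exists_minimal ⟨y, hyS⟩
  have hmy : m ≤ y := by simpa [hS] using hmS
  have hleast : ∀ z ∈ S, m ≤ z := by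
    intro z hz
    have hzy : z ≤ y := by simpa [hS] using hz
    by_cases hzm : z = m
    · exact le_of_eq hzm.symm
    · rcases hchain y hzy hmy hzm with h | h
      · exact absurd (lt_of_le_of_ne h hzm) (fun hlt => not_le_of_gt hlt (hmin hz hlt.le))
      · exact h
  refine ⟨m, ?_, hmy, ?_⟩
  · intro z hz
    by_contra hzm
    have hlt : z < m := lt_of_le_of_ne hz (fun h => hzm (h ▸ le_refl z))
    have hzS : z ∈ S := by simp [hS, le_trans hz hmy]
    exact not_le_of_gt hlt (hmin hzS hlt.le)
  · intro z hzmin hzy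
    have hzS : z ∈ S := by simp [hS, hzy]
    exact le_antisymm (hzmin (hleast z hzS)) (hleast z hzS)

lemma sum_min_hooks [DecidableEq P] [DecidablePred (IsMin : P → Prop)] (hchain : ∀ x : P, IsChain (· ≤ ·) {y : P | y ≤ x}) :
    ∑ x ∈ univ.filter (fun x : P => IsMin x), ({y : P | x ≤ y}.ncard) = Fintype.card P := by
  choose F hF1 hF2 hF3 using exists_unique_min hchain
  have key : (univ : Finset P).card =
      ∑ x ∈ univ.filter (fun x : P => IsMin x),
        (univ.filter (fun y => F y = x)).card :=
    Finset.card_eq_sum_card_fiberwise (fun y _ => by simp [hF1 y])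
  rw [Finset.card_univ] at key
  rw [key]
  refine Finset.sum_congr rfl fun x hx => ?_
  have hxmin : IsMin x := by simpa using hx
  have hset : {y : P | x ≤ y} = ↑(univ.filter (fun y => F y = x)) := by
    ext y
    simp only [Set.mem_setOf_eq, coe_filter, mem_univ, true_and, Set.mem_setOf_eq]
    constructor
    · intro h; exact (hF3 y x hxmin h).symm
    · intro h; exact h ▸ hF2 y
  rw [hset, Set.ncard_coe_finset]

end MinLemmas

section Aux
variable {P : Type*} [PartialOrder P] [DecidableEq P] {m : ℕ}

/-- Extend an equivalence on the complement of `x` to one on `P`, sending `x` to `0`. -/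
def extendEquiv (x : P) (g : {z : P // z ≠ x} ≃ Fin m) : P ≃ Fin (m + 1) where
  toFun y := if h : y = x then 0 else (g ⟨y, h⟩).succ
  invFun i := if h : i = 0 then x else (g.symm (i.pred h)).val
  left_inv y := by
    by_cases h : y = x
    · simp [h]
    · simp [h, Fin.succ_ne_zero, Fin.pred_succ]
  right_inv i := by
    by_cases h : i = 0
    · simp [h]
    · have hne : (g.symm (i.pred h)).val ≠ x := (g.symm (i.pred h)).prop
      simp only [dif_neg h, dif_neg hne]
      rw [show (⟨(g.symm (i.pred h)).val, hne⟩ : {z : P // z ≠ x}) = g.symm (i.pred h) from rfl]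
      simp [Fin.succ_pred]

lemma extendEquiv_apply_ne (x : P) (g : {z : P // z ≠ x} ≃ Fin m) {y : P} (h : y ≠ x) :
    extendEquiv x g y = (g ⟨y, h⟩).succ := dif_neg h

lemma extendEquiv_apply_self (x : P) (g : {z : P // z ≠ x} ≃ Fin m) :
    extendEquiv x g x = 0 := dif_pos rfl

def Φ :
    (Σ x : {x : P // IsMin x},
        {g : {z : P // z ≠ x.val} ≃ Fin m // ∀ a b, a < b → g a < g b}) →
      {f : P ≃ Fin (m + 1) // ∀ a b : P, a < b → f a < f b} :=
  fun s => ⟨extendEquiv s.1.val s.2.val, by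
    obtain ⟨⟨x, hx⟩, ⟨g, hg⟩⟩ := s
    rintro a b hab
    have hbx : b ≠ x := by
      rintro rfl
      exact absurd (hx hab.le) (not_le_of_gt hab)
    by_cases hax : a = x
    · rw [hax, extendEquiv_apply_self, extendEquiv_apply_ne x g hbx]
      exact Fin.succ_pos _
    · rw [extendEquiv_apply_ne x g hax, extendEquiv_apply_ne x g hbx,
        Fin.succ_lt_succ_iff]
      exact hg ⟨a, hax⟩ ⟨b, hbx⟩ hab⟩

lemma Φ_bijective : Function.Bijective (Φ (P := P) (m := m)) := by
  constructor
  · rintro ⟨⟨x, hx⟩, ⟨g, hg⟩⟩ ⟨⟨x', hx'⟩, ⟨g', hg'⟩⟩ h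
    have hf : extendEquiv x g = extendEquiv x' g' := congrArg Subtype.val h
    have hxx : x = x' := by
      by_contra hne
      have h1 : extendEquiv x g x = extendEquiv x' g' x := by rw [hf]
      rw [extendEquiv_apply_self, extendEquiv_apply_ne x' g' hne] at h1
      exact (Fin.succ_ne_zero _) h1.symm
    subst hxx
    have hgg : g = g' := by
      apply Equiv.ext
      rintro ⟨z, hz⟩
      have h1 : extendEquiv x g z = extendEquiv x g' z := by rw [hf]
      rw [extendEquiv_apply_ne x g hz, extendEquiv_apply_ne x g' hz] at h1
      exact Fin.succ_injective _ h1
    subst hgg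
    rfl
  · rintro ⟨f, hf⟩
    set x : P := f.symm 0 with hxdef
    have hfx : f x = 0 := f.apply_symm_apply 0
    have hx : IsMin x := by
      intro z hz
      by_contra hzx
      have hlt : z < x := lt_of_le_of_ne hz (fun h => hzx (h ▸ le_refl z))
      exact absurd (hfx ▸ hf z x hlt) (Fin.not_lt_zero _)
    have hne0 : ∀ z : {z : P // z ≠ x}, f z.val ≠ 0 := by
      rintro ⟨z, hz⟩ h
      exact hz (f.injective (by rw [h, hfx]))
    refine ⟨⟨⟨x, hx⟩, ⟨⟨fun z => (f z.val).pred (hne0 z),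
      fun i => ⟨f.symm i.succ,
        fun h => Fin.succ_ne_zero i (by simpa [hfx] using congrArg f h)⟩,
      ?_, ?_⟩, ?_⟩⟩, ?_⟩
    · rintro ⟨z, hz⟩
      simp [Fin.succ_pred]
    · intro i
      simp [Fin.pred_succ]
    · rintro ⟨a, ha⟩ ⟨b, hb⟩ hab
      have hab' : a < b := hab
      exact Fin.pred_lt_pred_iff (ha := hne0 ⟨a, ha⟩) (hb := hne0 ⟨b, hb⟩) |>.mpr (hf a b hab')
    · apply Subtype.ext
      apply Equiv.ext
      intro y
      show extendEquiv x _ y = f y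
      by_cases h : y = x
      · rw [h, extendEquiv_apply_self, hfx]
      · rw [extendEquiv_apply_ne x _ h]
        exact Fin.succ_pred _ (hne0 ⟨y, h⟩)
end Aux

lemma nat_card_sigma' {ι : Type*} [Fintype ι] (β : ι → Type*) [∀ i, Finite (β i)] :
    Nat.card (Σ i, β i) = ∑ i, Nat.card (β i) := by
  letI : ∀ i, Fintype (β i) := fun i => Fintype.ofFinite _
  simp [Nat.card_eq_fintype_card, Fintype.card_sigma]

universe u

theorem hook_aux (m : ℕ) : ∀ (P : Type u) [Fintype P] [PartialOrder P],
    (∀ x : P, IsChain (· ≤ ·) {y : P | y ≤ x}) → Fintype.card P = m →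
    Nat.card {f : P ≃ Fin m // ∀ x y : P, x < y → f x < f y} *
        ∏ x : P, ({y : P | x ≤ y}.ncard) = Nat.factorial m := by
  induction m with
  | zero =>
    intro P _ _ hchain hcard
    haveI : IsEmpty P := Fintype.card_eq_zero_iff.mp hcard
    haveI : Unique {f : P ≃ Fin 0 // ∀ x y : P, x < y → f x < f y} :=
      { default := ⟨Equiv.equivOfIsEmpty P (Fin 0), fun a => isEmptyElim a⟩
        uniq := fun a => Subtype.ext (Equiv.ext fun y => isEmptyElim y) }
    rw [Nat.card_unique]
    simp
  | succ m ih =>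
    intro P _ _ hchain hcard
    classical
    -- count linear extensions via the bijection Φ
    have hcount : Nat.card {f : P ≃ Fin (m + 1) // ∀ x y : P, x < y → f x < f y} =
        ∑ x : {x : P // IsMin x},
          Nat.card {g : {z : P // z ≠ x.val} ≃ Fin m // ∀ a b, a < b → g a < g b} := by
      rw [← Nat.card_congr (Equiv.ofBijective _ Φ_bijective)]
      exact nat_card_sigma' _
    rw [hcount, Finset.sum_mul]
    -- per-minimal-element computation
    have hterm : ∀ x : {x : P // IsMin x},
        Nat.card {g : {z : P // z ≠ x.val} ≃ Fin m // ∀ a b, a < b → g a < g b} *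
          ∏ y : P, ({w : P | y ≤ w}.ncard) =
        ({y : P | x.val ≤ y}.ncard) * Nat.factorial m := by
      rintro ⟨x, hx⟩
      set Q := {z : P // z ≠ x} with hQ
      have hchainQ : ∀ q : Q, IsChain (· ≤ ·) {w : Q | w ≤ q} := by
        rintro q a ha b hb hne
        have h := hchain q.val (Set.mem_setOf.mpr (ha : a.val ≤ q.val))
          (Set.mem_setOf.mpr (hb : b.val ≤ q.val)) (fun h => hne (Subtype.ext h))
        rcases h with h | h
        · exact Or.inl h
        · exact Or.inr h
      have hcardQ : Fintype.card Q = m := by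
        have : Fintype.card Q = Fintype.card P - 1 := by
          simp [hQ, Fintype.card_subtype_compl]
        omega
      have hIH := ih Q hchainQ hcardQ
      -- hooks are preserved
      have hhook : ∀ z : Q, ({w : Q | z ≤ w}.ncard) = {y : P | z.val ≤ y}.ncard := by
        intro z
        have himg : {y : P | z.val ≤ y} = Subtype.val '' {w : Q | z ≤ w} := by
          ext y
          simp only [Set.mem_setOf_eq, Set.mem_image]
          constructor
          · intro hy
            have hyx : y ≠ x := by
              rintro rfl
              exact z.prop (le_antisymm hy (hx hy))
            exact ⟨⟨y, hyx⟩, hy, rfl⟩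
          · rintro ⟨⟨w, hw⟩, h1, rfl⟩
            exact h1
        rw [himg, Set.ncard_image_of_injective _ Subtype.val_injective]
      -- product splits
      have hprod : ∏ y : P, ({w : P | y ≤ w}.ncard) =
          ({y : P | x ≤ y}.ncard) * ∏ z : Q, ({w : Q | z ≤ w}.ncard) := by
        rw [← Finset.mul_prod_erase univ _ (mem_univ x)]
        congr 1
        rw [Finset.prod_subtype (p := fun z => z ≠ x) (univ.erase x) (fun z => by simp)
          (fun y => ({w : P | y ≤ w}.ncard))]
        exact Finset.prod_congr rfl fun z _ => (hhook z).symm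
      rw [hprod, ← mul_assoc, mul_comm _ ({y : P | x ≤ y}.ncard), mul_assoc, hIH]
    calc ∑ x : {x : P // IsMin x},
          Nat.card {g : {z : P // z ≠ x.val} ≃ Fin m // ∀ a b, a < b → g a < g b} *
            ∏ y : P, ({w : P | y ≤ w}.ncard)
        = ∑ x : {x : P // IsMin x}, ({y : P | x.val ≤ y}.ncard) * Nat.factorial m := by
          exact Finset.sum_congr rfl fun x _ => hterm x
      _ = (∑ x : {x : P // IsMin x}, ({y : P | x.val ≤ y}.ncard)) * Nat.factorial m := by
          rw [Finset.sum_mul]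
      _ = (∑ x ∈ univ.filter (fun x : P => IsMin x), ({y : P | x ≤ y}.ncard)) *
            Nat.factorial m := by
          congr 1
          exact (Finset.sum_subtype (univ.filter (fun x : P => IsMin x)) (fun x => by simp) (fun x => ({y : P | x ≤ y}.ncard))).symm
      _ = (m + 1) * Nat.factorial m := by rw [sum_min_hooks hchain, hcard]
      _ = Nat.factorial (m + 1) := rfl

/-- Let `P` be a finite poset with `n` elements in which every principal down-set
`{y : y ≤ x}` is a chain (a forest poset).  Then the number of linear extensions of `P`
(bijections `f : P ≃ Fin n` with `f x < f y` whenever `x < y`), multiplied by the product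
over all `x ∈ P` of the size of the principal up-set `{y : x ≤ y}`, equals `n!`. -/
theorem stmt8 {P : Type*} [Fintype P] [PartialOrder P]
    (hchain : ∀ x : P, IsChain (· ≤ ·) {y : P | y ≤ x}) :
    Nat.card {f : P ≃ Fin (Fintype.card P) // ∀ x y : P, x < y → f x < f y} *
        ∏ x : P, ({y : P | x ≤ y}.ncard) =
      Nat.factorial (Fintype.card P) := by
  exact hook_aux (Fintype.card P) P hchain rfl
end
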